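/- arXiv:1401.7835 — 8 statements merged into one kernel-verified Lean document; each statement's English description precedes it below -/
import Mathlib

section
/- Let X be a Dedekind complete Riesz space with strong unit e, and let (G, Σ, μ) be as in the context. Let ρ be a finite modular on the space of all functions G → X. Then for every sequence (B_m)_{m∈ℕ} of sets in Σ_b and every (o)-sequence (ε_p)_{p∈ℕ} in ℝ there exists a strictly increasing map p : ℕ → ℕ such that ρ(ε_{p(m)}·e·1_{B_m}) ≤ (1/m)·e for every m ∈ ℕ (m ≥ 1). -/
open scoped ENNReal

/-- An `(o)`-sequence in a lattice-ordered group: a decreasing sequence of nonnegative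
elements whose infimum is `0`. -/
def IsOSeq {α : Type*} [Lattice α] [AddCommGroup α] (σ : ℕ → α) : Prop :=
  Antitone σ ∧ (∀ p, 0 ≤ σ p) ∧ IsGLB (Set.range σ) 0

/-- **Proposition (finiteness of modulars).**
Let `X` be a Dedekind complete Riesz space with strong unit `e`, `(G, Σ, μ)` a set with a
σ-algebra and a finitely additive `[0,∞]`-valued measure, and `ρ` a finite modular on `X^G`.
Then for every sequence `(B m)` in `Σ_b` and every `(o)`-sequence `(ε p)` in `ℝ` there is a
strictly increasing map `q : ℕ → ℕ` with `ρ(ε (q m) • e • 1_{B m}) ≤ (1/m) • e` for all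
`m ≥ 1`. -/
theorem finite_modular_diagonal
    {X G : Type*} [Lattice X] [AddCommGroup X]
    [CovariantClass X X (· + ·) (· ≤ ·)] [Module ℝ X] [PosSMulMono ℝ X]
    [MeasurableSpace G]
    -- Dedekind completeness of X
    (hDC : ∀ S : Set X, S.Nonempty → BddAbove S → ∃ x, IsLUB S x)
    -- strong unit e
    (e : X) (he : 0 < e) (hstrong : ∀ x : X, ∃ c : ℝ, 0 < c ∧ |x| ≤ c • e)
    -- finitely additive measure μ : Σ → [0,∞]
    (μ : Set G → ℝ≥0∞) (hμ0 : μ ∅ = 0)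
    (hμadd : ∀ A B : Set G, MeasurableSet A → MeasurableSet B → Disjoint A B →
      μ (A ∪ B) = μ A + μ B)
    -- a modular ρ on the space of all functions G → X
    (ρ : (G → X) → WithTop X)
    (hρ0 : ρ 0 = 0)
    (hρpos : ∀ f : G → X, 0 ≤ ρ f)
    (hρneg : ∀ f : G → X, ρ (-f) = ρ f)
    (hρconv : ∀ f h : G → X, ∀ α₁ α₂ : ℝ, 0 ≤ α₁ → 0 ≤ α₂ → α₁ + α₂ = 1 →
      ρ (α₁ • f + α₂ • h) ≤ ρ f + ρ h)
    -- ρ is finite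
    (hfin : ∀ A : Set G, MeasurableSet A → μ A < ⊤ → ∀ ε : ℕ → ℝ, IsOSeq ε →
      ∃ u : X, 0 ≤ u ∧ ∃ lam : ℕ → ℝ, IsOSeq lam ∧
        ∀ p : ℕ, ρ (Set.indicator A fun _ => ε p • e) ≤ ((lam p • u : X) : WithTop X))
    -- data: a sequence in Σ_b and an (o)-sequence in ℝ
    (B : ℕ → Set G) (hB : ∀ m, MeasurableSet (B m) ∧ μ (B m) < ⊤)
    (ε : ℕ → ℝ) (hε : IsOSeq ε) :
    ∃ q : ℕ → ℕ, StrictMono q ∧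
      ∀ m : ℕ, 1 ≤ m →
        ρ (Set.indicator (B m) fun _ => ε (q m) • e) ≤ (((m : ℝ)⁻¹ • e : X) : WithTop X) := by
  classical
  have hdata : ∀ m : ℕ, ∃ u : X, 0 ≤ u ∧ ∃ lam : ℕ → ℝ, IsOSeq lam ∧
      ∀ p, ρ (Set.indicator (B m) fun _ => ε p • e) ≤ ((lam p • u : X) : WithTop X) :=
    fun m => hfin (B m) (hB m).1 (hB m).2 ε hε
  choose u hu lam hlam hρlam using hdata
  choose c hc hcu using fun m => hstrong (u m)
  have hN : ∀ m : ℕ, ∃ p, lam m p * c m ≤ ((m : ℝ) + 1)⁻¹ := by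
    intro m
    by_contra h
    push_neg at h
    have hlb : (((m : ℝ) + 1)⁻¹ / c m) ∈ lowerBounds (Set.range (lam m)) := by
      rintro _ ⟨p, rfl⟩
      exact le_of_lt ((div_lt_iff₀ (hc m)).mpr (h p))
    have hle := (hlam m).2.2.2 hlb
    have hpos : (0 : ℝ) < ((m : ℝ) + 1)⁻¹ / c m := div_pos (by positivity) (hc m)
    linarith
  choose N hNle using hN
  let q : ℕ → ℕ := fun m => Nat.rec (N 0) (fun m ih => max (ih + 1) (N (m + 1))) m
  have hqmono : StrictMono q :=
    strictMono_nat_of_lt_succ fun n =>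
      lt_of_lt_of_le (Nat.lt_succ_self _) (le_max_left _ _)
  have hqN : ∀ m, N m ≤ q m := by
    intro m
    cases m with
    | zero => exact le_refl _
    | succ m => exact le_max_right _ _
  have hsmul : ∀ a b : ℝ, a ≤ b → a • e ≤ b • e := by
    intro a b hab
    rw [← sub_nonneg, ← sub_smul]
    calc (0 : X) = (b - a) • (0 : X) := (smul_zero _).symm
    _ ≤ (b - a) • e := smul_le_smul_of_nonneg_left he.le (sub_nonneg.mpr hab)
  refine ⟨q, hqmono, ?_⟩
  intro m hm
  refine le_trans (hρlam m (q m)) ?_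
  rw [WithTop.coe_le_coe]
  have h0 : 0 ≤ lam m (q m) := (hlam m).2.1 _
  have h2 : lam m (q m) • u m ≤ lam m (q m) • (c m • e) :=
    smul_le_smul_of_nonneg_left (le_trans (le_abs_self _) (hcu m)) h0
  rw [smul_smul] at h2
  refine h2.trans ?_
  have h1 : lam m (q m) ≤ lam m (N m) := (hlam m).1 (hqN m)
  have hmc : lam m (q m) * c m ≤ lam m (N m) * c m :=
    mul_le_mul_of_nonneg_right h1 (hc m).le
  have hm1 : (1 : ℝ) ≤ (m : ℝ) := by exact_mod_cast hm
  have hinv : ((m : ℝ) + 1)⁻¹ ≤ (m : ℝ)⁻¹ := by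
    apply inv_anti₀ (by linarith)
    linarith
  exact hsmul _ _ (le_trans (le_trans hmc (hNle m)) hinv)
end

section
/- (Vitali-type theorem.) Let X be a Dedekind complete Riesz space with strong unit e, let (G, Σ, μ) be as in the context, let ρ be a monotone finite modular on the space of all functions G → X, and let F be a free filter on ℕ. If (f_z)_{z∈ℕ}, f_z : G → X, μ-converges to 0 (relative to F) and is equi-absolutely continuous with respect to ρ and F, then there exists a real α > 0 such that (ρ(α·f_z))_{z∈ℕ} (o_F)-converges to 0, i.e. there is an (o)-sequence (σ_p) in X with {z ∈ ℕ : ρ(α·f_z) ≤ σ_p} ∈ F for every p. -/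
open scoped ENNReal

/-- The sequence `f z : G → X` `μ`-converges to `g : G → X` relative to the filter `F`. -/
def MuConv {X G : Type*} [Lattice X] [AddCommGroup X] [Module ℝ X] [MeasurableSpace G]
    (μ : Set G → ℝ≥0∞) (F : Filter ℕ) (e : X) (f : ℕ → G → X) (g : G → X) : Prop :=
  ∃ ε : ℕ → ℝ, IsOSeq ε ∧ ∃ σ : ℕ → ℝ, IsOSeq σ ∧
    ∃ A : ℕ → ℕ → Set G, (∀ z p, MeasurableSet (A z p)) ∧
      (∀ z p, {t : G | ¬ |f z t - g t| ≤ ε p • e} ⊆ A z p) ∧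
      (∀ p, {z : ℕ | μ (A z p) ≤ ENNReal.ofReal (σ p)} ∈ F)

/-- The sequence `f z : G → X` is `ρ`-`F`-equi-absolutely continuous. -/
def EquiAC {X G : Type*} [Lattice X] [AddCommGroup X] [Module ℝ X] [MeasurableSpace G]
    (μ : Set G → ℝ≥0∞) (F : Filter ℕ) (ρ : (G → X) → WithTop X) (f : ℕ → G → X) : Prop :=
  ∃ α : ℝ, 0 < α ∧
    (∀ σ : ℕ → ℝ, IsOSeq σ → ∃ w : ℕ → X, IsOSeq w ∧ ∃ Ξ : ℕ → Set ℕ,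
      (∀ p, Ξ p ∈ F) ∧
      ∀ p : ℕ, ∀ z ∈ Ξ p, ∀ B : Set G, MeasurableSet B → μ B ≤ ENNReal.ofReal (σ p) →
        ρ (Set.indicator B fun t => α • f z t) ≤ ((w p : X) : WithTop X)) ∧
    (∃ r : ℕ → X, IsOSeq r ∧ ∃ B : ℕ → Set G, (∀ m, MeasurableSet (B m) ∧ μ (B m) < ⊤) ∧
      ∀ m : ℕ,
        {z : ℕ | ρ (Set.indicator (B m)ᶜ fun t => α • f z t) ≤ ((r m : X) : WithTop X)} ∈ F)

section helpers

variable {X : Type*} [Lattice X] [AddCommGroup X]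
  [CovariantClass X X (· + ·) (· ≤ ·)] [Module ℝ X] [PosSMulMono ℝ X]

private lemma arch_le_zero
    (hDC : ∀ S : Set X, S.Nonempty → BddAbove S → ∃ x, IsLUB S x)
    {c u : X} (h : ∀ n : ℕ, (n : ℝ) • c ≤ u) : c ≤ 0 := by
  obtain ⟨s, hs⟩ := hDC (Set.range fun n : ℕ => (n : ℝ) • c)
    ⟨_, Set.mem_range_self 0⟩ ⟨u, by rintro x ⟨n, rfl⟩; exact h n⟩
  have h2 : s ≤ s - c := hs.2 (by
    rintro x ⟨n, rfl⟩
    rw [le_sub_iff_add_le]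
    have hmem := hs.1 (Set.mem_range_self (n + 1))
    calc (n : ℝ) • c + c = ((n + 1 : ℕ) : ℝ) • c := by push_cast; rw [add_smul, one_smul]
      _ ≤ s := hmem)
  have h3 := le_sub_iff_add_le.1 h2
  exact (add_le_iff_nonpos_right s).1 h3

private lemma le_zero_of_forall_le_smul
    (hDC : ∀ S : Set X, S.Nonempty → BddAbove S → ∃ x, IsLUB S x)
    {lam : ℕ → ℝ} (hlam : IsOSeq lam) {u b : X} (hu : 0 ≤ u)
    (h : ∀ p, b ≤ lam p • u) : b ≤ 0 := by
  have hcl : ∀ p, b ⊔ 0 ≤ lam p • u := fun p => sup_le (h p) (smul_nonneg (hlam.2.1 p) hu)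
  have harch : ∀ n : ℕ, (n : ℝ) • (b ⊔ 0) ≤ u := by
    intro n
    obtain ⟨p, hp⟩ : ∃ p, lam p < 1 / (n + 1) := by
      by_contra hcon
      push_neg at hcon
      have h1 : (1 : ℝ) / (n + 1) ≤ 0 := hlam.2.2.2 (by rintro x ⟨q, rfl⟩; exact hcon q)
      have h2 : (0 : ℝ) < 1 / ((n : ℝ) + 1) := by positivity
      linarith
    have hmul : (n : ℝ) * lam p ≤ 1 := by
      have hnn : (0 : ℝ) ≤ lam p := hlam.2.1 p
      have hn1 : (0 : ℝ) < (n : ℝ) + 1 := by positivity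
      have := (lt_div_iff₀ hn1).1 hp
      nlinarith
    calc (n : ℝ) • (b ⊔ 0) ≤ (n : ℝ) • (lam p • u) :=
          smul_le_smul_of_nonneg_left (hcl p) (Nat.cast_nonneg n)
      _ = ((n : ℝ) * lam p) • u := smul_smul _ _ _
      _ ≤ u := by
          have hpos : (0 : X) ≤ (1 - (n : ℝ) * lam p) • u :=
            smul_nonneg (by linarith) hu
          rw [sub_smul, one_smul] at hpos
          exact sub_nonneg.1 hpos
  exact le_trans le_sup_left (arch_le_zero hDC harch)

private lemma le_zero_of_forall_le_add_smul
    (hDC : ∀ S : Set X, S.Nonempty → BddAbove S → ∃ x, IsLUB S x)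
    {w : ℕ → X} (hw : IsOSeq w) {lam : ℕ → ℝ} (hlam : IsOSeq lam) {u b : X} (hu : 0 ≤ u)
    (h : ∀ p, b ≤ w p + lam p • u) : b ≤ 0 := by
  have key : ∀ q, b ≤ lam q • u := by
    intro q
    have hlb : b - lam q • u ∈ lowerBounds (Set.range w) := by
      rintro x ⟨p, rfl⟩
      have h1 : b ≤ w (max p q) + lam (max p q) • u := h _
      have h2 : w (max p q) ≤ w p := hw.1 (le_max_left p q)
      have h3 : lam (max p q) • u ≤ lam q • u := by
        have hpos : (0 : X) ≤ (lam q - lam (max p q)) • u :=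
          smul_nonneg (sub_nonneg.2 (hlam.1 (le_max_right p q))) hu
        rw [sub_smul] at hpos
        exact sub_nonneg.1 hpos
      exact sub_le_iff_le_add.2 (h1.trans (add_le_add h2 h3))
    have := hw.2.2.2 hlb
    exact sub_nonpos.1 this
  exact le_zero_of_forall_le_smul hDC hlam hu key

private lemma le_coe_inf' {ι : Type*} {s : Finset ι} (hs : s.Nonempty) (g : ι → X)
    {x : WithTop X} (h : ∀ i ∈ s, x ≤ (g i : WithTop X)) :
    x ≤ ((s.inf' hs g : X) : WithTop X) := by
  obtain ⟨i0, hi0⟩ := hs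
  lift x to X using ne_top_of_le_ne_top WithTop.coe_ne_top (h i0 hi0)
  exact WithTop.coe_le_coe.2 (Finset.le_inf' _ g fun i hi => WithTop.coe_le_coe.1 (h i hi))

private lemma add_le_coe_add {a b : WithTop X} {a' b' : X}
    (ha : a ≤ (a' : WithTop X)) (hb : b ≤ (b' : WithTop X)) :
    a + b ≤ ((a' + b' : X) : WithTop X) := by
  lift a to X using ne_top_of_le_ne_top WithTop.coe_ne_top ha
  lift b to X using ne_top_of_le_ne_top WithTop.coe_ne_top hb
  rw [← WithTop.coe_add]
  exact WithTop.coe_le_coe.2 (add_le_add (WithTop.coe_le_coe.1 ha) (WithTop.coe_le_coe.1 hb))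

end helpers
/-- **Vitali-type theorem.** Let `X` be a Dedekind complete Riesz space with strong unit `e`,
`ρ` a monotone finite modular on `X^G`, and `F` a free filter on `ℕ`. If `(f z)` `μ`-converges
to `0` and is equi-absolutely continuous, then there is `α > 0` such that `(ρ (α • f z))`
`(o_F)`-converges to `0`. -/


theorem vitali_modular
    {X G : Type*} [Lattice X] [AddCommGroup X]
    [CovariantClass X X (· + ·) (· ≤ ·)] [Module ℝ X] [PosSMulMono ℝ X]
    [MeasurableSpace G]
    -- Dedekind completeness of X
    (hDC : ∀ S : Set X, S.Nonempty → BddAbove S → ∃ x, IsLUB S x)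
    -- strong unit e
    (e : X) (he : 0 < e) (hstrong : ∀ x : X, ∃ c : ℝ, 0 < c ∧ |x| ≤ c • e)
    -- finitely additive measure μ : Σ → [0,∞]
    (μ : Set G → ℝ≥0∞) (hμ0 : μ ∅ = 0)
    (hμadd : ∀ A B : Set G, MeasurableSet A → MeasurableSet B → Disjoint A B →
      μ (A ∪ B) = μ A + μ B)
    -- a modular ρ on the space of all functions G → X
    (ρ : (G → X) → WithTop X)
    (hρ0 : ρ 0 = 0)
    (hρpos : ∀ f : G → X, 0 ≤ ρ f)
    (hρneg : ∀ f : G → X, ρ (-f) = ρ f)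
    (hρconv : ∀ f h : G → X, ∀ α₁ α₂ : ℝ, 0 ≤ α₁ → 0 ≤ α₂ → α₁ + α₂ = 1 →
      ρ (α₁ • f + α₂ • h) ≤ ρ f + ρ h)
    -- ρ is monotone
    (hρmono : ∀ f h : G → X, (∀ t, |f t| ≤ |h t|) → ρ f ≤ ρ h)
    -- ρ is finite
    (hfin : ∀ A : Set G, MeasurableSet A → μ A < ⊤ → ∀ ε : ℕ → ℝ, IsOSeq ε →
      ∃ u : X, 0 ≤ u ∧ ∃ lam : ℕ → ℝ, IsOSeq lam ∧
        ∀ p : ℕ, ρ (Set.indicator A fun _ => ε p • e) ≤ ((lam p • u : X) : WithTop X))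
    -- F is a free filter on ℕ
    (F : Filter ℕ) (hFproper : F.NeBot) (hFfree : F ≤ Filter.cofinite)
    -- the sequence (f z)
    (f : ℕ → G → X)
    (hconv : MuConv μ F e f 0)
    (hEAC : EquiAC μ F ρ f) :
    ∃ α : ℝ, 0 < α ∧ ∃ σ : ℕ → X, IsOSeq σ ∧
      ∀ p : ℕ, {z : ℕ | ρ (α • f z) ≤ ((σ p : X) : WithTop X)} ∈ F := by
  classical
  obtain ⟨ε, hε, σ₀, hσ₀, A, hAmeas, hAsub, hAF⟩ := hconv
  obtain ⟨α, hα, hEAC1, r, hr, B, hB, hBF⟩ := hEAC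
  obtain ⟨w, hw, Ξ, hΞF, hΞ⟩ := hEAC1 σ₀ hσ₀
  -- the scaled (o)-sequence α * ε
  have hε' : IsOSeq fun p => α * ε p := by
    refine ⟨fun p q hpq => mul_le_mul_of_nonneg_left (hε.1 hpq) hα.le,
      fun p => mul_nonneg hα.le (hε.2.1 p), ?_, ?_⟩
    · rintro x ⟨p, rfl⟩
      exact mul_nonneg hα.le (hε.2.1 p)
    · intro b hb
      have h1 : (1 / α) * b ∈ lowerBounds (Set.range ε) := by
        rintro x ⟨p, rfl⟩
        have h2 : b ≤ α * ε p := hb ⟨p, rfl⟩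
        have h3 := mul_le_mul_of_nonneg_left h2 (by positivity : (0:ℝ) ≤ 1 / α)
        calc (1 / α) * b ≤ (1 / α) * (α * ε p) := h3
          _ = ε p := by field_simp
      have h4 : (1 / α) * b ≤ 0 := hε.2.2.2 h1
      have h5 : (0:ℝ) < 1 / α := by positivity
      nlinarith
  choose u hu lam hlam hbound using fun m => hfin (B m) (hB m).1 (hB m).2 (fun p => α * ε p) hε'
  set τ : ℕ × ℕ → X := fun pm => w pm.1 + (lam pm.2 pm.1 • u pm.2 + r pm.2) with hτdef
  have hτnonneg : ∀ pm, 0 ≤ τ pm := fun pm =>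
    add_nonneg (hw.2.1 _) (add_nonneg (smul_nonneg ((hlam pm.2).2.1 _) (hu pm.2)) (hr.2.1 _))
  have hTne : ∀ n : ℕ, ((Finset.range (n + 1)) ×ˢ (Finset.range (n + 1))).Nonempty :=
    fun n => ⟨(0, 0), by simp⟩
  set σ' : ℕ → X := fun n => ((Finset.range (n + 1)) ×ˢ (Finset.range (n + 1))).inf' (hTne n) τ
    with hσ'def
  have hmemT : ∀ p m n : ℕ, p ≤ n → m ≤ n →
      (p, m) ∈ (Finset.range (n + 1)) ×ˢ (Finset.range (n + 1)) := by
    intro p m n hp hm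
    simp only [Finset.mem_product, Finset.mem_range]
    omega
  -- the key pointwise estimate
  have key : ∀ p m z, μ (A z p) ≤ ENNReal.ofReal (σ₀ p) → z ∈ Ξ p →
      ρ (Set.indicator (B m)ᶜ fun t => α • f z t) ≤ ((r m : X) : WithTop X) →
      ρ ((α / 3) • f z) ≤ ((τ (p, m) : X) : WithTop X) := by
    intro p m z hz1 hz2 hz3
    set g : G → X := fun t => α • f z t with hg
    set C2 : Set G := B m ∩ (A z p)ᶜ with hC2
    set C3 : Set G := (B m)ᶜ ∩ (A z p)ᶜ with hC3
    have hb1 : ρ (Set.indicator (A z p) g) ≤ ((w p : X) : WithTop X) :=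
      hΞ p z hz2 (A z p) (hAmeas z p) hz1
    have hsmall : ∀ t, t ∉ A z p → |f z t| ≤ ε p • e := by
      intro t ht
      by_contra hcon
      exact ht (hAsub z p (by simpa using hcon))
    have hb2 : ρ (Set.indicator C2 g) ≤ ((lam m p • u m : X) : WithTop X) := by
      refine le_trans (hρmono _ (Set.indicator (B m) fun _ => (α * ε p) • e) ?_) (hbound m p)
      intro t
      by_cases ht : t ∈ C2
      · rw [Set.indicator_of_mem ht, Set.indicator_of_mem ht.1]
        have hfz := hsmall t ht.2
        have hfz1 : f z t ≤ ε p • e := le_trans (le_abs_self _) hfz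
        have hfz2 : -(f z t) ≤ ε p • e := le_trans (neg_le_abs _) hfz
        have h1 : g t ≤ (α * ε p) • e := by
          calc g t = α • f z t := rfl
            _ ≤ α • (ε p • e) := smul_le_smul_of_nonneg_left hfz1 hα.le
            _ = (α * ε p) • e := smul_smul _ _ _
        have h2 : -(g t) ≤ (α * ε p) • e := by
          calc -(g t) = α • (-(f z t)) := by rw [hg, smul_neg]
            _ ≤ α • (ε p • e) := smul_le_smul_of_nonneg_left hfz2 hα.le
            _ = (α * ε p) • e := smul_smul _ _ _
        have h3 : |g t| ≤ (α * ε p) • e := abs_le'.2 ⟨h1, h2⟩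
        rwa [abs_of_nonneg (smul_nonneg (mul_nonneg hα.le (hε.2.1 p)) he.le)]
      · rw [Set.indicator_of_notMem ht, abs_zero]
        exact abs_nonneg _
    have hb3 : ρ (Set.indicator C3 g) ≤ ((r m : X) : WithTop X) := by
      refine le_trans (hρmono _ (Set.indicator (B m)ᶜ fun t => α • f z t) ?_) hz3
      intro t
      by_cases ht : t ∈ C3
      · rw [Set.indicator_of_mem ht, Set.indicator_of_mem ht.1]
      · rw [Set.indicator_of_notMem ht, abs_zero]
        exact abs_nonneg _
    set k : G → X := (1 / 2 : ℝ) • Set.indicator C2 g + (1 / 2 : ℝ) • Set.indicator C3 g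
      with hk
    have hdecomp : (α / 3) • f z =
        (1 / 3 : ℝ) • Set.indicator (A z p) g + (2 / 3 : ℝ) • k := by
      funext t
      simp only [hk, hg, Pi.add_apply, Pi.smul_apply]
      by_cases h1 : t ∈ A z p
      · have h2 : t ∉ C2 := fun hc => hc.2 h1
        have h3 : t ∉ C3 := fun hc => hc.2 h1
        rw [Set.indicator_of_mem h1, Set.indicator_of_notMem h2, Set.indicator_of_notMem h3]
        simp only [smul_zero, add_zero, zero_add, smul_smul]
        congr 1
        ring
      · by_cases h4 : t ∈ B m
        · have h5 : t ∈ C2 := ⟨h4, h1⟩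
          have h6 : t ∉ C3 := fun hc => hc.1 h4
          rw [Set.indicator_of_notMem h1, Set.indicator_of_mem h5, Set.indicator_of_notMem h6]
          simp only [smul_zero, add_zero, zero_add, smul_smul]
          congr 1
          ring
        · have h5 : t ∉ C2 := fun hc => h4 hc.1
          have h6 : t ∈ C3 := ⟨h4, h1⟩
          rw [Set.indicator_of_notMem h1, Set.indicator_of_notMem h5, Set.indicator_of_mem h6]
          simp only [smul_zero, add_zero, zero_add, smul_smul]
          congr 1
          ring
    have hkb : ρ k ≤ ((lam m p • u m + r m : X) : WithTop X) := by
      refine le_trans (hρconv (Set.indicator C2 g) (Set.indicator C3 g) (1 / 2) (1 / 2)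
        (by norm_num) (by norm_num) (by norm_num)) ?_
      exact add_le_coe_add hb2 hb3
    calc ρ ((α / 3) • f z)
        = ρ ((1 / 3 : ℝ) • Set.indicator (A z p) g + (2 / 3 : ℝ) • k) := by rw [hdecomp]
      _ ≤ ρ (Set.indicator (A z p) g) + ρ k :=
          hρconv _ _ (1 / 3) (2 / 3) (by norm_num) (by norm_num) (by norm_num)
      _ ≤ ((τ (p, m) : X) : WithTop X) := add_le_coe_add hb1 hkb
  refine ⟨α / 3, by positivity, σ', ⟨?_, ?_, ?_, ?_⟩, ?_⟩
  · -- antitone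
    intro n n' hnn'
    refine Finset.le_inf' _ _ fun pm hpm => Finset.inf'_le _ ?_
    have hsub : (Finset.range (n + 1)) ×ˢ (Finset.range (n + 1)) ⊆
        (Finset.range (n' + 1)) ×ˢ (Finset.range (n' + 1)) :=
      Finset.product_subset_product (Finset.range_subset_range.2 (by omega))
        (Finset.range_subset_range.2 (by omega))
    exact hsub hpm
  · -- nonneg
    intro n
    exact Finset.le_inf' _ _ fun pm _ => hτnonneg pm
  · -- 0 is a lower bound
    rintro x ⟨n, rfl⟩
    exact Finset.le_inf' _ _ fun pm _ => hτnonneg pm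
  · -- 0 is the greatest lower bound
    intro b hb
    have hτb : ∀ p m : ℕ, b ≤ τ (p, m) := by
      intro p m
      have h1 : b ≤ σ' (max p m) := hb ⟨max p m, rfl⟩
      exact h1.trans (Finset.inf'_le _ (hmemT p m (max p m) (le_max_left _ _) (le_max_right _ _)))
    have hrm : ∀ m, b ≤ r m := by
      intro m
      have h1 : b - r m ≤ 0 := by
        refine le_zero_of_forall_le_add_smul hDC hw (hlam m) (hu m) fun p => ?_
        rw [sub_le_iff_le_add, add_assoc]
        exact hτb p m
      exact sub_nonpos.1 h1
    exact hr.2.2.2 (by rintro x ⟨m, rfl⟩; exact hrm m)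
  · -- filter membership
    intro n
    have hI : (⋂ pm ∈ ((Finset.range (n + 1)) ×ˢ (Finset.range (n + 1))),
        ({z : ℕ | μ (A z pm.1) ≤ ENNReal.ofReal (σ₀ pm.1)} ∩ Ξ pm.1 ∩
          {z : ℕ | ρ (Set.indicator (B pm.2)ᶜ fun t => α • f z t) ≤
            ((r pm.2 : X) : WithTop X)})) ∈ F := by
      refine (Filter.biInter_finset_mem _).2 fun pm _ => ?_
      exact Filter.inter_mem (Filter.inter_mem (hAF pm.1) (hΞF pm.1)) (hBF pm.2)
    refine F.sets_of_superset hI fun z hz => ?_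
    simp only [Set.mem_iInter] at hz
    show ρ ((α / 3) • f z) ≤ ((σ' n : X) : WithTop X)
    refine le_coe_inf' (hTne n) τ fun pm hpm => ?_
    obtain ⟨⟨hz1, hz2⟩, hz3⟩ := hz pm hpm
    exact key pm.1 pm.2 z hz1 hz2 hz3
end

section
/- (Lebesgue dominated convergence theorem for modulars.) Let X be a Dedekind complete Riesz space with strong unit e, let (G, Σ, μ) be as in the context, let ρ be a monotone finite modular on the space of all functions G → X, and let F be a free filter on ℕ. Let (f_z)_{z∈ℕ}, f_z : G → X, μ-converge to 0 (relative to F). Suppose there are a function g : G → X that is absolutely continuous with respect to ρ and a set F₀ ∈ F such that |f_z(t)| ≤ g(t) for all z ∈ F₀ and all t ∈ G. Then there exists a real α > 0 such that (ρ(α·f_z))_{z∈ℕ} (o_F)-converges to 0, i.e. there is an (o)-sequence (σ_p) in X with {z ∈ ℕ : ρ(α·f_z) ≤ σ_p} ∈ F for every p. -/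
open scoped ENNReal

/-- The single function `g : G → X` is absolutely continuous with respect to the modular `ρ`. -/
def AbsCont {X G : Type*} [Lattice X] [AddCommGroup X] [Module ℝ X] [MeasurableSpace G]
    (μ : Set G → ℝ≥0∞) (ρ : (G → X) → WithTop X) (g : G → X) : Prop :=
  ∃ α : ℝ, 0 < α ∧
    (∀ σ : ℕ → ℝ, IsOSeq σ → ∃ w : ℕ → X, IsOSeq w ∧
      ∀ p : ℕ, ∀ B : Set G, MeasurableSet B → μ B ≤ ENNReal.ofReal (σ p) →
        ρ (Set.indicator B fun t => α • g t) ≤ ((w p : X) : WithTop X)) ∧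
    (∃ zs : ℕ → X, IsOSeq zs ∧ ∃ B : ℕ → Set G, (∀ m, MeasurableSet (B m) ∧ μ (B m) < ⊤) ∧
      ∀ m : ℕ, ρ (Set.indicator (B m)ᶜ fun t => α • g t) ≤ ((zs m : X) : WithTop X))

section Aux
variable {X : Type*} [Lattice X] [AddCommGroup X]
  [CovariantClass X X (· + ·) (· ≤ ·)] [Module ℝ X] [PosSMulMono ℝ X]

/-- Scalar monotonicity in the scalar variable, from `PosSMulMono`. -/
lemma my_smul_le_smul_right {c d : ℝ} {u : X} (h : d ≤ c) (hu : 0 ≤ u) :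
    d • u ≤ c • u := by
  have h1 : 0 ≤ (c - d) • u := smul_nonneg (by linarith) hu
  rw [sub_smul, sub_nonneg] at h1
  exact h1

lemma my_abs_smul_le {c : ℝ} (hc : 0 ≤ c) {x y : X} (h : |x| ≤ y) : |c • x| ≤ c • y := by
  refine abs_le'.mpr ⟨?_, ?_⟩
  · exact smul_le_smul_of_nonneg_left ((le_abs_self x).trans h) hc
  · rw [← smul_neg]
    exact smul_le_smul_of_nonneg_left ((neg_le_abs x).trans h) hc

/-- Archimedean property from Dedekind completeness. -/
lemma my_arch (hDC : ∀ S : Set X, S.Nonempty → BddAbove S → ∃ x, IsLUB S x)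
    (b u : X) (h : ∀ n : ℕ, ((n : ℝ) + 1) • b ≤ u) : b ≤ 0 := by
  obtain ⟨s, hs⟩ := hDC (Set.range fun n : ℕ => ((n : ℝ) + 1) • b)
    ⟨((0 : ℝ) + 1) • b, ⟨0, by norm_num⟩⟩ ⟨u, by rintro x ⟨n, rfl⟩; exact h n⟩
  have hub : s - b ∈ upperBounds (Set.range fun n : ℕ => ((n : ℝ) + 1) • b) := by
    rintro x ⟨n, rfl⟩
    have h2 : ((n : ℝ) + 1 + 1) • b ≤ s := by
      have := hs.1 ⟨n + 1, rfl⟩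
      simpa [Nat.cast_add, Nat.cast_one, add_assoc] using this
    rw [add_smul, one_smul] at h2
    exact le_sub_iff_add_le.mpr h2
  exact (le_sub_self_iff s).mp (hs.2 hub)

/-- Small-value extraction for real (o)-sequences. -/
lemma my_oseq_small {σ : ℕ → ℝ} (hσ : IsOSeq σ) {δ : ℝ} (hδ : 0 < δ) : ∃ p, σ p ≤ δ := by
  by_contra hcon
  push_neg at hcon
  have hlb : δ ∈ lowerBounds (Set.range σ) := by rintro x ⟨p, rfl⟩; exact (hcon p).le
  linarith [hσ.2.2.2 hlb]

/-- If `b ≤ w p + lam p • u` for every `p`, where `w` is an (o)-sequence in `X`,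
`lam` a real (o)-sequence and `0 ≤ u`, then `b ≤ 0`. -/
lemma my_lb_le_zero (hDC : ∀ S : Set X, S.Nonempty → BddAbove S → ∃ x, IsLUB S x)
    {w : ℕ → X} (hw : IsOSeq w) {lam : ℕ → ℝ} (hlam : IsOSeq lam) {u : X} (hu : 0 ≤ u)
    {b : X} (hb : ∀ p, b ≤ w p + lam p • u) : b ≤ 0 := by
  -- Step 1: b ≤ lam q • u for every q
  have step1 : ∀ q, b ≤ lam q • u := by
    intro q
    have hlbw : b - lam q • u ∈ lowerBounds (Set.range w) := by
      rintro x ⟨p, rfl⟩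
      rcases le_total q p with hqp | hpq
      · have h1 : lam p • u ≤ lam q • u := my_smul_le_smul_right (hlam.1 hqp) hu
        have := (hb p).trans (add_le_add le_rfl h1)
        exact sub_le_iff_le_add.mpr this
      · calc b - lam q • u ≤ w q := by
              have h1 := hb q
              exact sub_le_iff_le_add.mpr (by rwa [add_comm (w q)] at h1 ⊢ <;> exact h1)
          _ ≤ w p := hw.1 hpq
    have := hw.2.2.2 hlbw
    exact sub_nonpos.mp this
  -- Step 2: Archimedean argument
  refine my_arch hDC b u fun n => ?_
  have hpos : (0 : ℝ) < 1 / ((n : ℝ) + 1) := by positivity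
  obtain ⟨q, hq⟩ := my_oseq_small hlam hpos
  have h1 : b ≤ (1 / ((n : ℝ) + 1)) • u :=
    (step1 q).trans (my_smul_le_smul_right hq hu)
  have h2 : ((n : ℝ) + 1) • b ≤ ((n : ℝ) + 1) • (1 / ((n : ℝ) + 1)) • u :=
    smul_le_smul_of_nonneg_left h1 (by positivity)
  rwa [smul_smul, mul_one_div_cancel (by positivity), one_smul] at h2

end Aux

/-- **Lebesgue dominated convergence theorem for modulars.** -/
theorem lebesgue_dominated_modular
    {X G : Type*} [Lattice X] [AddCommGroup X]
    [CovariantClass X X (· + ·) (· ≤ ·)] [Module ℝ X] [PosSMulMono ℝ X]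
    [MeasurableSpace G]
    -- Dedekind completeness of X
    (hDC : ∀ S : Set X, S.Nonempty → BddAbove S → ∃ x, IsLUB S x)
    -- strong unit e
    (e : X) (he : 0 < e) (hstrong : ∀ x : X, ∃ c : ℝ, 0 < c ∧ |x| ≤ c • e)
    -- finitely additive measure μ : Σ → [0,∞]
    (μ : Set G → ℝ≥0∞) (hμ0 : μ ∅ = 0)
    (hμadd : ∀ A B : Set G, MeasurableSet A → MeasurableSet B → Disjoint A B →
      μ (A ∪ B) = μ A + μ B)
    -- a modular ρ on the space of all functions G → X
    (ρ : (G → X) → WithTop X)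
    (hρ0 : ρ 0 = 0)
    (hρpos : ∀ f : G → X, 0 ≤ ρ f)
    (hρneg : ∀ f : G → X, ρ (-f) = ρ f)
    (hρconv : ∀ f h : G → X, ∀ α₁ α₂ : ℝ, 0 ≤ α₁ → 0 ≤ α₂ → α₁ + α₂ = 1 →
      ρ (α₁ • f + α₂ • h) ≤ ρ f + ρ h)
    -- ρ is monotone
    (hρmono : ∀ f h : G → X, (∀ t, |f t| ≤ |h t|) → ρ f ≤ ρ h)
    -- ρ is finite
    (hfin : ∀ A : Set G, MeasurableSet A → μ A < ⊤ → ∀ ε : ℕ → ℝ, IsOSeq ε →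
      ∃ u : X, 0 ≤ u ∧ ∃ lam : ℕ → ℝ, IsOSeq lam ∧
        ∀ p : ℕ, ρ (Set.indicator A fun _ => ε p • e) ≤ ((lam p • u : X) : WithTop X))
    -- F is a free filter on ℕ
    (F : Filter ℕ) (hFproper : F.NeBot) (hFfree : F ≤ Filter.cofinite)
    -- the sequence (f z) μ-converges to 0
    (f : ℕ → G → X)
    (hconv : MuConv μ F e f 0)
    -- the dominating function g
    (g : G → X) (hg : AbsCont μ ρ g)
    (F₀ : Set ℕ) (hF₀ : F₀ ∈ F) (hdom : ∀ z ∈ F₀, ∀ t : G, |f z t| ≤ g t) :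
    ∃ α : ℝ, 0 < α ∧ ∃ σ : ℕ → X, IsOSeq σ ∧
      ∀ p : ℕ, {z : ℕ | ρ (α • f z) ≤ ((σ p : X) : WithTop X)} ∈ F := by
  obtain ⟨ε, hε, σ', hσ', A, hAmeas, hAsub, hAF⟩ := hconv
  obtain ⟨αg, hαg, h1, h2⟩ := hg
  obtain ⟨w, hw, hwb⟩ := h1 σ' hσ'
  obtain ⟨zs, hzs, B, hBm, hzb⟩ := h2
  -- scaled (o)-sequence αg * ε
  have hεα : IsOSeq (fun p => αg * ε p) := by
    refine ⟨fun p q h => mul_le_mul_of_nonneg_left (hε.1 h) hαg.le,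
      fun p => mul_nonneg hαg.le (hε.2.1 p), ?_, ?_⟩
    · rintro x ⟨p, rfl⟩; exact mul_nonneg hαg.le (hε.2.1 p)
    · intro b hb
      have hlb : b / αg ∈ lowerBounds (Set.range ε) := by
        rintro x ⟨p, rfl⟩
        rw [div_le_iff₀ hαg]
        calc b ≤ αg * ε p := hb ⟨p, rfl⟩
          _ = ε p * αg := mul_comm _ _
      have hd : b / αg ≤ 0 := hε.2.2.2 hlb
      have := mul_nonpos_iff.mpr (Or.inr ⟨hd, hαg.le⟩)
      calc b = b / αg * αg := (div_mul_cancel₀ b hαg.ne').symm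
        _ ≤ 0 := this
  choose u hu lam hlam hcb using fun m => hfin (B m) (hBm m).1 (hBm m).2 _ hεα
  -- g is nonnegative
  obtain ⟨z₀, hz₀⟩ := F.nonempty_of_mem hF₀
  have hgnn : ∀ t, 0 ≤ g t := fun t => (abs_nonneg _).trans (hdom z₀ hz₀ t)
  -- the candidate (o)-sequence
  set c : ℕ → ℕ → X := fun m p => w p + (lam m p • u m + zs m) with hc
  have hcnn : ∀ m p, 0 ≤ c m p := fun m p =>
    add_nonneg (hw.2.1 p) (add_nonneg (smul_nonneg ((hlam m).2.1 p) (hu m)) (hzs.2.1 m))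
  have hcanti : ∀ m, Antitone fun p => c m p := fun m p q hpq =>
    add_le_add (hw.1 hpq)
      (add_le_add (my_smul_le_smul_right ((hlam m).1 hpq) (hu m)) le_rfl)
  set σs : ℕ → X := fun p => (Finset.range (p + 1)).inf' ⟨0, by simp⟩ (fun m => c m p)
    with hσs
  have hσs_le : ∀ p m, m ≤ p → σs p ≤ c m p := fun p m hmp =>
    Finset.inf'_le _ (Finset.mem_range.mpr (Nat.lt_succ_of_le hmp))
  refine ⟨αg / 3, by positivity, σs, ⟨?_, ?_, ?_, ?_⟩, ?_⟩
  · -- Antitone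
    intro p q hpq
    refine Finset.le_inf' _ _ fun m hm => ?_
    have hmp : m ≤ p := Nat.lt_succ_iff.mp (Finset.mem_range.mp hm)
    exact (hσs_le q m (hmp.trans hpq)).trans (hcanti m hpq)
  · -- nonneg
    intro p
    exact Finset.le_inf' _ _ fun m _ => hcnn m p
  · -- lower bound
    rintro x ⟨p, rfl⟩
    exact Finset.le_inf' _ _ fun m _ => hcnn m p
  · -- greatest lower bound
    intro b hb
    have hbp : ∀ p, b ≤ σs p := fun p => hb ⟨p, rfl⟩
    have hbz : ∀ m, b ≤ zs m := by
      intro m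
      have hball : ∀ p, b ≤ c m p := by
        intro p
        rcases le_total m p with hmp | hpm
        · exact (hbp p).trans (hσs_le p m hmp)
        · exact ((hbp m).trans (hσs_le m m le_rfl)).trans (hcanti m hpm)
      have : b - zs m ≤ 0 := by
        refine my_lb_le_zero hDC hw (hlam m) (hu m) fun p => ?_
        have := hball p
        rw [hc] at this
        have h3 : b ≤ (w p + lam m p • u m) + zs m := by
          rwa [add_assoc]
        exact sub_le_iff_le_add.mpr h3
      exact sub_nonpos.mp this
    have : b ∈ lowerBounds (Set.range zs) := by rintro x ⟨m, rfl⟩; exact hbz m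
    exact hzs.2.2.2 this
  · -- the filter statement
    intro p
    refine Filter.mem_of_superset (Filter.inter_mem hF₀ (hAF p)) ?_
    rintro z ⟨hzF, hzA⟩
    simp only [Set.mem_setOf_eq] at hzA ⊢
    -- key estimate for each m
    have key : ∀ m, ρ ((αg / 3) • f z) ≤ ((c m p : X) : WithTop X) := by
      intro m
      set S : Set G := A z p with hS
      set T : Set G := B m \ S with hT
      set U : Set G := (S ∪ B m)ᶜ with hU
      set u₁ : G → X := S.indicator (fun t => αg • f z t) with hu₁
      set u₂ : G → X := T.indicator (fun t => αg • f z t) with hu₂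
      set u₃ : G → X := U.indicator (fun t => αg • f z t) with hu₃
      have hsplit : (αg / 3) • f z
          = (1/3 : ℝ) • u₁ + (2/3 : ℝ) • ((1/2 : ℝ) • u₂ + (1/2 : ℝ) • u₃) := by
        funext t
        simp only [Pi.add_apply, Pi.smul_apply, hu₁, hu₂, hu₃, hT, hU,
          Set.indicator_apply, Set.mem_diff, Set.mem_compl_iff, Set.mem_union]
        by_cases h1 : t ∈ S <;> by_cases h2 : t ∈ B m <;>
          simp [h1, h2, smul_smul] <;> module
      have hconv1 : ρ ((αg / 3) • f z) ≤ ρ u₁ + (ρ u₂ + ρ u₃) := by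
        calc ρ ((αg / 3) • f z)
            = ρ ((1/3 : ℝ) • u₁ + (2/3 : ℝ) • ((1/2 : ℝ) • u₂ + (1/2 : ℝ) • u₃)) := by
              rw [hsplit]
          _ ≤ ρ u₁ + ρ ((1/2 : ℝ) • u₂ + (1/2 : ℝ) • u₃) :=
              hρconv _ _ _ _ (by norm_num) (by norm_num) (by norm_num)
          _ ≤ ρ u₁ + (ρ u₂ + ρ u₃) :=
              add_le_add le_rfl (hρconv _ _ _ _ (by norm_num) (by norm_num) (by norm_num))
      -- bound the three pieces
      have hb1 : ρ u₁ ≤ ((w p : X) : WithTop X) := by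
        refine le_trans (hρmono u₁ (S.indicator fun t => αg • g t) fun t => ?_)
          (hwb p S (hAmeas z p) hzA)
        by_cases h1 : t ∈ S
        · simp only [hu₁, Set.indicator_of_mem h1]
          exact (my_abs_smul_le hαg.le (hdom z hzF t)).trans (le_abs_self _)
        · simp [hu₁, Set.indicator_of_notMem h1]
      have hb2 : ρ u₂ ≤ ((lam m p • u m : X) : WithTop X) := by
        refine le_trans (hρmono u₂ (Set.indicator (B m) fun _ => (αg * ε p) • e)
          fun t => ?_) (hcb m p)
        by_cases h1 : t ∈ T
        · have htB : t ∈ B m := h1.1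
          have htA : t ∉ S := h1.2
          have hfe : |f z t| ≤ ε p • e := by
            by_contra hcon
            exact htA (hAsub z p (by simpa using hcon))
          simp only [hu₂, Set.indicator_of_mem h1, Set.indicator_of_mem htB]
          have := my_abs_smul_le hαg.le hfe
          rw [smul_smul] at this
          exact this.trans (le_abs_self _)
        · simp only [hu₂, Set.indicator_of_notMem h1, abs_zero]
          exact abs_nonneg _
      have hb3 : ρ u₃ ≤ ((zs m : X) : WithTop X) := by
        refine le_trans (hρmono u₃ (Set.indicator (B m)ᶜ fun t => αg • g t)
          fun t => ?_) (hzb m)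
        by_cases h1 : t ∈ U
        · have htB : t ∉ B m := fun h => h1 (Or.inr h)
          simp only [hu₃, Set.indicator_of_mem h1,
            Set.indicator_of_mem (Set.mem_compl htB)]
          exact (my_abs_smul_le hαg.le (hdom z hzF t)).trans (le_abs_self _)
        · simp only [hu₃, Set.indicator_of_notMem h1, abs_zero]
          exact abs_nonneg _
      calc ρ ((αg / 3) • f z) ≤ ρ u₁ + (ρ u₂ + ρ u₃) := hconv1
        _ ≤ ((w p : X) : WithTop X) + (((lam m p • u m : X) : WithTop X)
              + ((zs m : X) : WithTop X)) := add_le_add hb1 (add_le_add hb2 hb3)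
        _ = ((c m p : X) : WithTop X) := by rw [hc]; push_cast; ring
    -- combine over m ≤ p
    have hne : ρ ((αg / 3) • f z) ≠ ⊤ :=
      fun h => (h ▸ key 0).not_gt (WithTop.coe_lt_top _)
    obtain ⟨x, hx⟩ := WithTop.ne_top_iff_exists.mp hne
    rw [← hx, WithTop.coe_le_coe]
    refine Finset.le_inf' _ _ fun m _ => ?_
    have := key m
    rw [← hx, WithTop.coe_le_coe] at this
    exact this
end

section
/- Let 1 < a < b be reals and let f : ℝ → ℝ be a bounded measurable function vanishing outside [a,b]. Then for every integer n ≥ 2 the function T_n f : (0,∞) → ℝ is Lipschitz on (0,∞) (there is L > 0 with |T_n f(s₁) − T_n f(s₂)| ≤ L·|s₁ − s₂| for all s₁, s₂ > 0) and Lebesgue integrable on (0,∞), i.e. ∫₀^{+∞} |T_n f(s)| ds < +∞. -/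
open MeasureTheory

lemma aux_pow_sub_pow (x y : ℝ) (hy : 0 ≤ y) (hxy : y ≤ x) :
    ∀ n : ℕ, x ^ n - y ^ n ≤ n * x ^ (n - 1) * (x - y) := by
  intro n
  induction n with
  | zero => simp
  | succ m ih =>
    rcases Nat.eq_zero_or_pos m with rfl | hm
    · simp
    · have hx : 0 ≤ x := hy.trans hxy
      have hxm : x * x ^ (m - 1) = x ^ m := by
        rw [← pow_succ']; congr 1; omega
      have h2 : x * (x ^ m - y ^ m) ≤ x * (m * x ^ (m - 1) * (x - y)) :=
        mul_le_mul_of_nonneg_left ih hx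
      have h3 : x * (m * x ^ (m - 1) * (x - y)) = m * x ^ m * (x - y) := by
        rw [show x * (m * x ^ (m - 1) * (x - y)) = (m : ℝ) * (x * x ^ (m - 1)) * (x - y) by ring,
          hxm]
      have h4 : (x - y) * y ^ m ≤ (x - y) * x ^ m :=
        mul_le_mul_of_nonneg_left (pow_le_pow_left₀ hy hxy m) (by linarith)
      have h1 : x ^ (m + 1) - y ^ (m + 1) = x * (x ^ m - y ^ m) + (x - y) * y ^ m := by ring
      have hfin : x ^ (m + 1) - y ^ (m + 1) ≤ (m + 1 : ℝ) * x ^ m * (x - y) := by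
        rw [h1]; nlinarith [h2, h3, h4]
      simpa [Nat.add_sub_cancel, Nat.cast_add] using hfin

/-- The `n`-th moment operator: `T_n f (s) = (n / sⁿ) ∫₀ˢ t^{n-1} f(t) dt`. -/
noncomputable def momentOp (n : ℕ) (f : ℝ → ℝ) (s : ℝ) : ℝ :=
  ((n : ℝ) / s ^ n) * ∫ t in (0 : ℝ)..s, t ^ (n - 1) * f t

/-- If `1 < a < b` and `f` is bounded, measurable and vanishes outside `[a,b]`, then for every
`n ≥ 2` the function `T_n f` is Lipschitz on `(0,∞)` and Lebesgue integrable on `(0,∞)`. -/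
theorem momentOp_lipschitz_integrable
    (a b : ℝ) (ha : 1 < a) (hab : a < b)
    (f : ℝ → ℝ) (hmeas : Measurable f) (hbdd : ∃ M : ℝ, ∀ t : ℝ, |f t| ≤ M)
    (hsupp : ∀ t : ℝ, t ∉ Set.Icc a b → f t = 0)
    (n : ℕ) (hn : 2 ≤ n) :
    (∃ L : ℝ, 0 < L ∧ ∀ s₁ s₂ : ℝ, 0 < s₁ → 0 < s₂ →
      |momentOp n f s₁ - momentOp n f s₂| ≤ L * |s₁ - s₂|) ∧
    (∫⁻ s in Set.Ioi (0 : ℝ), ENNReal.ofReal |momentOp n f s| < ⊤) := by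
  obtain ⟨M, hM⟩ := hbdd
  set M' : ℝ := max M 0 with hM'def
  have hM' : ∀ t, |f t| ≤ M' := fun t => (hM t).trans (le_max_left _ _)
  have hM'0 : 0 ≤ M' := le_max_right _ _
  have hb0 : (0 : ℝ) < b := by linarith
  set g : ℝ → ℝ := fun t => t ^ (n - 1) * f t with hgdef
  set K : ℝ := M' * b ^ (n - 1) with hKdef
  have hK0 : 0 ≤ K := mul_nonneg hM'0 (by positivity)
  -- pointwise bound of g by an indicator
  have hg_bd : ∀ t, ‖g t‖ ≤ Set.indicator (Set.Icc a b) (fun _ => K) t := by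
    intro t
    by_cases ht : t ∈ Set.Icc a b
    · rw [Set.indicator_of_mem ht]
      have ht0 : (0 : ℝ) ≤ t := le_trans (by linarith) ht.1
      have : ‖g t‖ = |t| ^ (n - 1) * |f t| := by
        simp [hgdef, abs_mul, abs_pow]
      rw [this, abs_of_nonneg ht0]
      have h1 : t ^ (n - 1) ≤ b ^ (n - 1) := pow_le_pow_left₀ ht0 ht.2 _
      calc t ^ (n - 1) * |f t| ≤ b ^ (n - 1) * M' :=
            mul_le_mul h1 (hM' t) (abs_nonneg _) (by positivity)
        _ = K := by rw [hKdef]; ring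
    · rw [Set.indicator_of_notMem ht]
      simp [hgdef, hsupp t ht]
  have hg_meas : Measurable g := (measurable_id.pow_const _).mul hmeas
  have hind_int : Integrable (Set.indicator (Set.Icc a b) (fun _ => K)) := by
    rw [integrable_indicator_iff measurableSet_Icc]
    exact integrableOn_const (by simp [Real.volume_Icc])
  have hg_int : Integrable g :=
    hind_int.mono' hg_meas.aestronglyMeasurable (ae_of_all _ hg_bd)
  set F : ℝ → ℝ := fun s => ∫ t in (0 : ℝ)..s, g t with hFdef
  have hT : ∀ s, momentOp n f s = ((n : ℝ) / s ^ n) * F s := fun s => rfl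
  -- uniform bound on F
  set C : ℝ := K * (b - a) with hCdef
  have hC0 : 0 ≤ C := mul_nonneg hK0 (by linarith)
  have hF_bd : ∀ s : ℝ, 0 < s → |F s| ≤ C := by
    intro s hs
    have h1 : F s = ∫ t in Set.Ioc (0 : ℝ) s, g t := intervalIntegral.integral_of_le hs.le
    have h2 : |∫ t in Set.Ioc (0 : ℝ) s, g t| ≤ ∫ t in Set.Ioc (0 : ℝ) s, ‖g t‖ :=
      norm_integral_le_integral_norm g
    have h3 : ∫ t in Set.Ioc (0 : ℝ) s, ‖g t‖ ≤ ∫ t, ‖g t‖ :=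
      setIntegral_le_integral hg_int.norm (ae_of_all _ fun t => norm_nonneg _)
    have h4 : ∫ t, ‖g t‖ ≤ ∫ t, Set.indicator (Set.Icc a b) (fun _ => K) t :=
      integral_mono hg_int.norm hind_int hg_bd
    have h5 : ∫ t, Set.indicator (Set.Icc a b) (fun _ => K) t = C := by
      rw [integral_indicator_const (K : ℝ) measurableSet_Icc]
      simp [Real.volume_Icc, ENNReal.toReal_ofReal (by linarith : (0:ℝ) ≤ b - a), hCdef]
      rw [max_eq_left (by linarith : (0:ℝ) ≤ b - a)]
      ring
    rw [h1]
    calc |∫ t in Set.Ioc (0 : ℝ) s, g t| ≤ ∫ t, ‖g t‖ := h2.trans h3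
      _ ≤ C := h4.trans_eq h5
  -- F vanishes on (0, a]
  have hF_small : ∀ s : ℝ, 0 < s → s ≤ a → F s = 0 := by
    intro s hs hsa
    have h1 : F s = ∫ t in Set.Ioc (0 : ℝ) s, g t := intervalIntegral.integral_of_le hs.le
    rw [h1]
    have hne : ∀ᵐ t : ℝ ∂volume, t ≠ a := by
      simp only [ae_iff, not_not]
      rw [show {x : ℝ | x = a} = {a} from Set.setOf_eq_eq_singleton]
      exact measure_singleton a
    have : ∀ᵐ t ∂(volume.restrict (Set.Ioc (0 : ℝ) s)), g t = 0 := by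
      filter_upwards [ae_restrict_mem measurableSet_Ioc, ae_restrict_of_ae hne] with t ht hta
      have : t < a := lt_of_le_of_ne (ht.2.trans hsa) hta
      have : f t = 0 := hsupp t (fun hmem => absurd hmem.1 (not_le.2 this))
      simp [hgdef, this]
    exact integral_eq_zero_of_ae this
  -- Lipschitz-type bound on F
  have hF_diff : ∀ s₁ s₂ : ℝ, s₁ ≤ s₂ → |F s₂ - F s₁| ≤ K * (s₂ - s₁) := by
    intro s₁ s₂ h12
    have hadd : F s₁ + ∫ t in s₁..s₂, g t = F s₂ :=
      intervalIntegral.integral_add_adjacent_intervals hg_int.intervalIntegrable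
        hg_int.intervalIntegrable
    have : F s₂ - F s₁ = ∫ t in s₁..s₂, g t := by linarith
    rw [this]
    have hb : ∀ x ∈ Set.uIoc s₁ s₂, ‖g x‖ ≤ K := by
      intro x _
      exact (hg_bd x).trans (Set.indicator_le' (fun _ _ => le_refl K) (fun _ _ => hK0) x)
    calc ‖∫ t in s₁..s₂, g t‖ ≤ K * |s₂ - s₁| :=
          intervalIntegral.norm_integral_le_of_norm_le_const hb
      _ = K * (s₂ - s₁) := by rw [abs_of_nonneg (by linarith)]
  set L : ℝ := (n : ℝ) * n * C + n * K + 1 with hLdef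
  have hn0 : (0 : ℝ) ≤ n := Nat.cast_nonneg n
  have hL0 : 0 < L := by positivity
  constructor
  · refine ⟨L, hL0, ?_⟩
    suffices H : ∀ s₁ s₂ : ℝ, 0 < s₁ → s₁ ≤ s₂ →
        |momentOp n f s₁ - momentOp n f s₂| ≤ L * (s₂ - s₁) by
      intro s₁ s₂ h1 h2
      rcases le_total s₁ s₂ with h | h
      · calc |momentOp n f s₁ - momentOp n f s₂| ≤ L * (s₂ - s₁) := H s₁ s₂ h1 h
          _ = L * |s₁ - s₂| := by rw [abs_sub_comm, abs_of_nonneg (by linarith)]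
      · calc |momentOp n f s₁ - momentOp n f s₂| = |momentOp n f s₂ - momentOp n f s₁| :=
            abs_sub_comm _ _
          _ ≤ L * (s₁ - s₂) := H s₂ s₁ h2 h
          _ = L * |s₁ - s₂| := by rw [abs_of_nonneg (by linarith)]
    intro s₁ s₂ hs₁ h12
    have hs₂ : 0 < s₂ := lt_of_lt_of_le hs₁ h12
    have hs₂n : (0 : ℝ) < s₂ ^ n := by positivity
    by_cases hca : s₂ ≤ a
    · rw [hT s₁, hT s₂, hF_small s₁ hs₁ (h12.trans hca), hF_small s₂ hs₂ hca]
      simp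
      exact mul_nonneg hL0.le (by linarith)
    · push_neg at hca
      by_cases hca1 : s₁ ≤ a
      · -- T s₁ = 0
        have hF1 : F s₁ = 0 := hF_small s₁ hs₁ hca1
        have hF2 : |F s₂| ≤ K * (s₂ - s₁) := by
          have := hF_diff s₁ s₂ h12
          rwa [hF1, sub_zero] at this
        have hs₂1 : (1 : ℝ) ≤ s₂ ^ n := one_le_pow₀ (by linarith)
        rw [hT s₁, hT s₂, hF1, mul_zero, zero_sub, abs_neg, abs_mul]
        have h1 : |(n : ℝ) / s₂ ^ n| ≤ (n : ℝ) := by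
          rw [abs_of_nonneg (by positivity)]
          rw [div_le_iff₀ hs₂n]
          exact le_mul_of_one_le_right hn0 hs₂1
        calc |(n : ℝ) / s₂ ^ n| * |F s₂| ≤ (n : ℝ) * (K * (s₂ - s₁)) :=
              mul_le_mul h1 hF2 (abs_nonneg _) hn0
          _ ≤ L * (s₂ - s₁) := by
            rw [hLdef]
            have hsub : (0 : ℝ) ≤ s₂ - s₁ := by linarith
            nlinarith [mul_nonneg (mul_nonneg (mul_nonneg hn0 hn0) hC0) hsub, hsub]
      · push_neg at hca1
        have hs₁1 : (1 : ℝ) < s₁ := lt_trans ha hca1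
        have hs₂1 : (1 : ℝ) < s₂ := lt_of_lt_of_le hs₁1 h12
        have hs₁n : (0 : ℝ) < s₁ ^ n := by positivity
        have honele1 : (1 : ℝ) ≤ s₁ ^ n := one_le_pow₀ hs₁1.le
        have honele2 : (1 : ℝ) ≤ s₂ ^ n := one_le_pow₀ hs₂1.le
        -- key inverse-power estimate
        have key : 1 / s₁ ^ n - 1 / s₂ ^ n ≤ (n : ℝ) * (s₂ - s₁) := by
          rw [div_sub_div _ _ (ne_of_gt hs₁n) (ne_of_gt hs₂n), div_le_iff₀ (by positivity)]
          have hp := aux_pow_sub_pow s₂ s₁ hs₁.le h12 n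
          have hq : s₂ ^ (n - 1) ≤ s₂ ^ n := pow_le_pow_right₀ hs₂1.le (Nat.sub_le n 1)
          have hr : s₂ ^ n ≤ s₁ ^ n * s₂ ^ n := le_mul_of_one_le_left hs₂n.le honele1
          have hsub : (0 : ℝ) ≤ s₂ - s₁ := by linarith
          have t1 : (n : ℝ) * (s₂ - s₁) * s₂ ^ (n - 1) ≤ (n : ℝ) * (s₂ - s₁) * s₂ ^ n :=
            mul_le_mul_of_nonneg_left hq (mul_nonneg hn0 hsub)
          have t2 : (n : ℝ) * (s₂ - s₁) * s₂ ^ n ≤ (n : ℝ) * (s₂ - s₁) * (s₁ ^ n * s₂ ^ n) :=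
            mul_le_mul_of_nonneg_left hr (mul_nonneg hn0 hsub)
          calc 1 * s₂ ^ n - s₁ ^ n * 1 = s₂ ^ n - s₁ ^ n := by ring
            _ ≤ (n : ℝ) * s₂ ^ (n - 1) * (s₂ - s₁) := hp
            _ = (n : ℝ) * (s₂ - s₁) * s₂ ^ (n - 1) := by ring
            _ ≤ (n : ℝ) * (s₂ - s₁) * (s₁ ^ n * s₂ ^ n) := t1.trans t2
        have hdecomp : momentOp n f s₁ - momentOp n f s₂ =
            (n : ℝ) * F s₁ * (1 / s₁ ^ n - 1 / s₂ ^ n) + ((n : ℝ) / s₂ ^ n) * (F s₁ - F s₂) := by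
          rw [hT s₁, hT s₂]
          field_simp
          ring
        have habs1 : |1 / s₁ ^ n - 1 / s₂ ^ n| = 1 / s₁ ^ n - 1 / s₂ ^ n := by
          rw [abs_of_nonneg]
          have : s₁ ^ n ≤ s₂ ^ n := pow_le_pow_left₀ hs₁.le h12 n
          have h1 : 1 / s₂ ^ n ≤ 1 / s₁ ^ n := one_div_le_one_div_of_le hs₁n this
          linarith
        have hFd : |F s₁ - F s₂| ≤ K * (s₂ - s₁) := by
          rw [abs_sub_comm]; exact hF_diff s₁ s₂ h12
        have hdivn : |(n : ℝ) / s₂ ^ n| ≤ (n : ℝ) := by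
          rw [abs_of_nonneg (by positivity), div_le_iff₀ hs₂n]
          exact le_mul_of_one_le_right hn0 honele2
        calc |momentOp n f s₁ - momentOp n f s₂|
            ≤ |(n : ℝ) * F s₁ * (1 / s₁ ^ n - 1 / s₂ ^ n)| +
              |((n : ℝ) / s₂ ^ n) * (F s₁ - F s₂)| := by rw [hdecomp]; exact abs_add_le _ _
          _ ≤ (n : ℝ) * C * ((n : ℝ) * (s₂ - s₁)) + (n : ℝ) * (K * (s₂ - s₁)) := by
              have e1 : |(n : ℝ) * F s₁ * (1 / s₁ ^ n - 1 / s₂ ^ n)| ≤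
                  (n : ℝ) * C * ((n : ℝ) * (s₂ - s₁)) := by
                rw [abs_mul, abs_mul, abs_of_nonneg hn0, habs1]
                have h1 : |F s₁| ≤ C := hF_bd s₁ hs₁
                have h3 : (0 : ℝ) ≤ 1 / s₁ ^ n - 1 / s₂ ^ n := by
                  rw [← habs1]; exact abs_nonneg _
                have h4 : |F s₁| * (1 / s₁ ^ n - 1 / s₂ ^ n) ≤ C * ((n : ℝ) * (s₂ - s₁)) :=
                  mul_le_mul h1 key h3 hC0
                calc (n : ℝ) * |F s₁| * (1 / s₁ ^ n - 1 / s₂ ^ n)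
                    = (n : ℝ) * (|F s₁| * (1 / s₁ ^ n - 1 / s₂ ^ n)) := by ring
                  _ ≤ (n : ℝ) * (C * ((n : ℝ) * (s₂ - s₁))) :=
                      mul_le_mul_of_nonneg_left h4 hn0
                  _ = (n : ℝ) * C * ((n : ℝ) * (s₂ - s₁)) := by ring
              have e2 : |((n : ℝ) / s₂ ^ n) * (F s₁ - F s₂)| ≤ (n : ℝ) * (K * (s₂ - s₁)) := by
                rw [abs_mul]
                exact mul_le_mul hdivn hFd (abs_nonneg _) hn0
              linarith
          _ ≤ L * (s₂ - s₁) := by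
              rw [hLdef]
              have hsub : (0 : ℝ) ≤ s₂ - s₁ := by linarith
              nlinarith [hsub]
  · -- integrability
    have hFcont : Continuous F :=
      intervalIntegral.continuous_primitive (fun _ _ => hg_int.intervalIntegrable) 0
    have hTmeas : Measurable (momentOp n f) := by
      have : momentOp n f = fun s => ((n : ℝ) / s ^ n) * F s := funext hT
      rw [this]
      exact (measurable_const.div (measurable_id.pow_const n)).mul hFcont.measurable
    have h1 : IntegrableOn (momentOp n f) (Set.Ioc 0 a) := by
      rw [integrableOn_congr_fun (g := fun _ => (0 : ℝ))
        (fun s hs => by rw [hT s, hF_small s hs.1 hs.2, mul_zero]) measurableSet_Ioc]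
      exact integrableOn_zero
    have h2 : IntegrableOn (momentOp n f) (Set.Ioi a) := by
      have hbound : IntegrableOn (fun s : ℝ => ((n : ℝ) * C) * s ^ (-2 : ℝ)) (Set.Ioi a) :=
        (integrableOn_Ioi_rpow_of_lt (by norm_num) (by linarith : (0:ℝ) < a)).const_mul _
      refine Integrable.mono' hbound (hTmeas.aestronglyMeasurable.restrict) ?_
      filter_upwards [ae_restrict_mem measurableSet_Ioi] with s hs
      have hsa : a < s := hs
      have hs0 : (0 : ℝ) < s := by linarith
      have hs1 : (1 : ℝ) < s := by linarith
      have hsn : (0 : ℝ) < s ^ n := by positivity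
      have hrp : s ^ (-2 : ℝ) = (s ^ 2)⁻¹ := by
        rw [show (-2 : ℝ) = -(2 : ℕ) by norm_num, Real.rpow_neg hs0.le, Real.rpow_natCast]
      have h22 : s ^ 2 ≤ s ^ n := pow_le_pow_right₀ hs1.le hn
      have hFb : |F s| ≤ C := hF_bd s hs0
      rw [Real.norm_eq_abs, hT s, abs_mul, abs_of_nonneg (by positivity : (0:ℝ) ≤ (n:ℝ)/s^n),
        hrp]
      calc (n : ℝ) / s ^ n * |F s| ≤ (n : ℝ) / s ^ n * C :=
            mul_le_mul_of_nonneg_left hFb (by positivity)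
        _ ≤ (n : ℝ) / s ^ 2 * C := by
            have : (n : ℝ) / s ^ n ≤ (n : ℝ) / s ^ 2 :=
              div_le_div_of_nonneg_left hn0 (by positivity) h22
            exact mul_le_mul_of_nonneg_right this hC0
        _ = ((n : ℝ) * C) * (s ^ 2)⁻¹ := by ring
    have hInt : IntegrableOn (momentOp n f) (Set.Ioi 0) := by
      refine ((h1.union h2).mono_set ?_)
      intro s hs
      rcases le_or_gt s a with h | h
      · exact Or.inl ⟨hs, h⟩
      · exact Or.inr h
    have hfin := hInt.hasFiniteIntegral
    calc ∫⁻ s in Set.Ioi (0:ℝ), ENNReal.ofReal |momentOp n f s|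
        = ∫⁻ s in Set.Ioi (0:ℝ), ‖momentOp n f s‖₊ :=
          lintegral_congr fun s => by
            rw [← Real.norm_eq_abs]; exact ofReal_norm_eq_enorm _
      _ < ⊤ := hfin
end

section
/- Let 1 < a < b be reals and let f : ℝ → ℝ be a continuous function vanishing outside [a,b]. Then for every integer n ≥ 2, ∫₀^{+∞} T_n f(s) ds = (n/(n−1))·∫_a^b f(s) ds. -/
open MeasureTheory

/-- If `1 < a < b` and `f` is continuous and vanishes outside `[a,b]`, then for every `n ≥ 2`,
`∫₀^∞ T_n f(s) ds = (n/(n-1)) ∫_a^b f(s) ds`. -/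
theorem momentOp_integral_eq
    (a b : ℝ) (ha : 1 < a) (hab : a < b)
    (f : ℝ → ℝ) (hcont : Continuous f)
    (hsupp : ∀ t : ℝ, t ∉ Set.Icc a b → f t = 0)
    (n : ℕ) (hn : 2 ≤ n) :
    ∫ s in Set.Ioi (0 : ℝ), momentOp n f s = ((n : ℝ) / (n - 1)) * ∫ s in a..b, f s := by
  have ha0 : (0:ℝ) < a := lt_trans one_pos ha
  have hb0 : (0:ℝ) < b := ha0.trans hab
  have hn1 : (1:ℝ) < (n:ℝ) := by exact_mod_cast lt_of_lt_of_le one_lt_two hn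
  have hn1' : (n:ℝ) - 1 ≠ 0 := by linarith
  set g : ℝ → ℝ := fun t => t ^ (n - 1) * f t with hg
  have hgcont : Continuous g := (continuous_pow _).mul hcont
  set F : ℝ → ℝ := fun s => ∫ t in (0:ℝ)..s, g t with hFdef
  have hmom : ∀ s, momentOp n f s = ((n:ℝ)/s^n) * F s := fun s => rfl
  -- F vanishes on (-∞, a]
  have hF0 : ∀ s, s ≤ a → F s = 0 := by
    intro s hs
    have hne : ∀ᵐ t : ℝ, t ≠ a := by
      rw [MeasureTheory.ae_iff]
      simpa using measure_singleton a
    have : F s = ∫ t in (0:ℝ)..s, (0:ℝ) := by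
      apply intervalIntegral.integral_congr_ae
      filter_upwards [hne] with t hta htmem
      have hta' : t ≤ a := by
        rcases Set.mem_uIoc.mp htmem with h | h
        · exact h.2.trans hs
        · exact h.2.trans ha0.le
      have : f t = 0 := hsupp t (fun hmem => hta (le_antisymm hta' hmem.1))
      simp [hg, this]
    simpa using this
  -- F is constant on [b, ∞)
  have hFb : ∀ s, b ≤ s → F s = F b := by
    intro s hs
    have hadd : F b + ∫ t in b..s, g t = F s :=
      intervalIntegral.integral_add_adjacent_intervals
        (hgcont.intervalIntegrable _ _) (hgcont.intervalIntegrable _ _)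
    have hz : ∫ t in b..s, g t = 0 := by
      rw [intervalIntegral.integral_of_le hs]
      apply setIntegral_eq_zero_of_forall_eq_zero
      intro t ht
      have : f t = 0 := hsupp t (fun hmem => absurd hmem.2 (not_le.mpr ht.1))
      simp [hg, this]
    linarith
  have hFcont : Continuous F :=
    intervalIntegral.continuous_primitive (fun _ _ => hgcont.intervalIntegrable _ _) 0
  have hFderiv : ∀ s : ℝ, HasDerivAt F (g s) s := fun s =>
    (hgcont.integral_hasStrictDerivAt 0 s).hasDerivAt
  -- auxiliary function for integration by parts
  set c : ℝ := (n:ℝ) / ((n:ℝ) - 1) with hc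
  set u : ℝ → ℝ := fun s => -c * s ^ (1 - (n:ℤ)) with hu
  have hcast : ((1 - (n:ℤ) : ℤ) : ℝ) = 1 - (n:ℝ) := by push_cast; ring
  have huderiv : ∀ s : ℝ, s ≠ 0 → HasDerivAt u ((n:ℝ) / s ^ n) s := by
    intro s hs
    have h := (hasDerivAt_zpow (1 - (n:ℤ)) s (Or.inl hs)).const_mul (-c)
    refine HasDerivAt.congr_deriv h ?_
    have h1 : (1 - (n:ℤ)) - 1 = -(n:ℤ) := by ring
    rw [h1, zpow_neg, zpow_natCast, hcast]
    field_simp [hc]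
    have hcn : c * ((n:ℝ) - 1) = n := by rw [hc]; exact div_mul_cancel₀ _ hn1'
    linear_combination hcn
  -- rewrite s^(n-1) as zpow for s ≠ 0
  have hzpow : ∀ s : ℝ, s ≠ 0 → u s * g s = -c * f s := by
    intro s hs
    have hcast2 : ((n:ℤ) - 1) = ((n - 1 : ℕ) : ℤ) := by
      have : (1:ℕ) ≤ n := le_trans one_le_two hn
      push_cast [this]; ring
    have : s ^ (1 - (n:ℤ)) * s ^ ((n:ℤ) - 1) = 1 := by
      rw [← zpow_add₀ hs]; norm_num
    calc u s * g s = -c * (s ^ (1 - (n:ℤ)) * s ^ ((n:ℤ) - 1)) * f s := by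
          rw [hcast2, zpow_natCast]; simp [hu, hg]; ring
      _ = -c * f s := by rw [this]; ring
  -- integration by parts on [a, b]
  have hparts : ∫ s in a..b, u s * g s
      = u b * F b - u a * F a - ∫ s in a..b, ((n:ℝ) / s ^ n) * F s := by
    apply intervalIntegral.integral_mul_deriv_eq_deriv_mul
    · intro x hx
      rw [Set.uIcc_of_le hab.le] at hx
      exact huderiv x (ne_of_gt (lt_of_lt_of_le ha0 hx.1))
    · intro x _; exact hFderiv x
    · -- IntervalIntegrable (fun s => n / s^n * F s)
      apply ContinuousOn.intervalIntegrable
      rw [Set.uIcc_of_le hab.le]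
      exact continuousOn_const.div (continuous_pow n).continuousOn
        (fun x (hx : x ∈ Set.Icc a b) =>
          pow_ne_zero _ (ne_of_gt (lt_of_lt_of_le ha0 hx.1)))
    · exact hgcont.intervalIntegrable _ _
  have hI : ∫ s in a..b, u s * g s = -c * ∫ s in a..b, f s := by
    rw [← intervalIntegral.integral_const_mul]
    apply intervalIntegral.integral_congr
    intro x hx
    rw [Set.uIcc_of_le hab.le] at hx
    exact hzpow x (ne_of_gt (lt_of_lt_of_le ha0 hx.1))
  have hP2 : ∫ s in a..b, momentOp n f s
      = u b * F b + c * ∫ s in a..b, f s := by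
    have := hparts
    rw [hI, hF0 a le_rfl] at this
    have heq : ∫ s in a..b, momentOp n f s = ∫ s in a..b, ((n:ℝ) / s ^ n) * F s := by
      apply intervalIntegral.integral_congr; intro x _; exact hmom x
    rw [heq]; linarith
  -- integral over (b, ∞)
  have hrpow : ∫ s in Set.Ioi b, s ^ (-(n:ℝ)) = -b ^ (-(n:ℝ) + 1) / (-(n:ℝ) + 1) :=
    integral_Ioi_rpow_of_lt (by linarith) hb0
  have hint3eq : ∀ s ∈ Set.Ioi b, momentOp n f s = ((n:ℝ) * F b) * s ^ (-(n:ℝ)) := by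
    intro s hs
    have hs0 : (0:ℝ) < s := hb0.trans hs
    rw [hmom, hFb s (le_of_lt hs), Real.rpow_neg hs0.le, Real.rpow_natCast]
    field_simp
  have hint3 : IntegrableOn (momentOp n f) (Set.Ioi b) := by
    have hi : IntegrableOn (fun s : ℝ => ((n:ℝ) * F b) * s ^ (-(n:ℝ))) (Set.Ioi b) :=
      (integrableOn_Ioi_rpow_of_lt (by linarith : -(n:ℝ) < -1) hb0).const_mul _
    exact hi.congr_fun (fun s hs => (hint3eq s hs).symm) measurableSet_Ioi
  have hP3 : ∫ s in Set.Ioi b, momentOp n f s = c * F b * b ^ (1 - (n:ℤ)) := by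
    rw [setIntegral_congr_fun measurableSet_Ioi hint3eq, integral_const_mul, hrpow]
    have hb' : b ^ (-(n:ℝ) + 1) = b ^ (1 - (n:ℤ)) := by
      rw [← Real.rpow_intCast b (1 - (n:ℤ)), hcast]
      ring_nf
    have hne2 : (1:ℝ) - (n:ℝ) ≠ 0 := by linarith
    have hne3 : -(n:ℝ) + 1 ≠ 0 := by linarith
    rw [hb', hc]
    field_simp
    ring
  -- integrability on (0, a] and (a, b]
  have hint1 : IntegrableOn (momentOp n f) (Set.Ioc 0 a) := by
    refine (integrableOn_zero).congr_fun (fun s hs => ?_) measurableSet_Ioc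
    rw [hmom, hF0 s hs.2, mul_zero]
  have hint2 : IntegrableOn (momentOp n f) (Set.Ioc a b) := by
    apply (ContinuousOn.integrableOn_Icc ?_).mono_set Set.Ioc_subset_Icc_self
    intro s hs
    have hs0 : s ≠ 0 := ne_of_gt (lt_of_lt_of_le ha0 hs.1)
    exact ((continuousOn_const.div (continuous_pow n).continuousOn
      (fun x hx => pow_ne_zero _ (ne_of_gt (lt_of_lt_of_le ha0 hx.1)))).mul
      hFcont.continuousOn) s hs
  have hsplit2 : IntegrableOn (momentOp n f) (Set.Ioc 0 b) := by
    rw [← Set.Ioc_union_Ioc_eq_Ioc ha0.le hab.le]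
    exact hint1.union hint2
  -- assemble
  have key : ∫ s in Set.Ioi (0:ℝ), momentOp n f s
      = (∫ s in Set.Ioc (0:ℝ) a, momentOp n f s) + (∫ s in Set.Ioc a b, momentOp n f s)
        + ∫ s in Set.Ioi b, momentOp n f s := by
    rw [← Set.Ioc_union_Ioi_eq_Ioi hb0.le,
      setIntegral_union (Set.Ioc_disjoint_Ioi le_rfl) measurableSet_Ioi hsplit2 hint3,
      ← Set.Ioc_union_Ioc_eq_Ioc ha0.le hab.le,
      setIntegral_union (Set.Ioc_disjoint_Ioc_of_le le_rfl) measurableSet_Ioc hint1 hint2]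
  have hz1 : ∫ s in Set.Ioc (0:ℝ) a, momentOp n f s = 0 := by
    apply setIntegral_eq_zero_of_forall_eq_zero
    intro s hs
    rw [hmom, hF0 s hs.2, mul_zero]
  have hmid : ∫ s in Set.Ioc a b, momentOp n f s = ∫ s in a..b, momentOp n f s :=
    (intervalIntegral.integral_of_le hab.le).symm
  rw [key, hz1, hmid, hP2, hP3, zero_add]
  have hub : u b = -c * b ^ (1 - (n:ℤ)) := rfl
  rw [hub]
  ring
end

section
/- Let 0 < a < b be reals and let f : ℝ → ℝ be a continuous function vanishing outside [a,b]. Then the sequence (T_n f)_n converges to f uniformly on (0,∞): sup_{s > 0} |T_n f(s) − f(s)| → 0 as n → ∞. -/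
open MeasureTheory Filter

lemma momentOp_key_bound (n : ℕ) (hn : 1 ≤ n) (f : ℝ → ℝ) (hcont : Continuous f)
    (s : ℝ) (hs : 0 < s) (M ε η : ℝ) (hM : ∀ t, |f t| ≤ M)
    (hε : 0 ≤ ε) (hη0 : 0 < η) (hη1 : η ≤ 1)
    (hnear : ∀ t ∈ Set.Icc ((1 - η) * s) s, |f t - f s| ≤ ε) :
    |momentOp n f s - f s| ≤ 2 * M * (1 - η) ^ n + ε := by
  have hn0 : (n : ℕ) ≠ 0 := by omega
  have hn' : (0 : ℝ) < n := by exact_mod_cast Nat.pos_of_ne_zero hn0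
  have hsn : (0 : ℝ) < s ^ n := pow_pos hs n
  set c : ℝ := (1 - η) * s with hc
  have hc0 : 0 ≤ c := mul_nonneg (by linarith) hs.le
  have hcs : c ≤ s := by nlinarith
  have hM0 : 0 ≤ M := le_trans (abs_nonneg _) (hM 0)
  have hcont1 : Continuous fun t : ℝ => t ^ (n - 1) * (f t - f s) :=
    (continuous_pow _).mul (hcont.sub continuous_const)
  have hcont2 : Continuous fun t : ℝ => t ^ (n - 1) * f t := (continuous_pow _).mul hcont
  have hexp : n - 1 + 1 = n := Nat.succ_pred_eq_of_pos (Nat.pos_of_ne_zero hn0)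
  have hpow : ∀ x y : ℝ, (∫ t in x..y, t ^ (n - 1)) = (y ^ n - x ^ n) / n := by
    intro x y
    rw [integral_pow, hexp]
    norm_cast
    simp [hexp]
  -- main identity
  have hId : momentOp n f s - f s
      = ((n : ℝ) / s ^ n) * ∫ t in (0 : ℝ)..s, t ^ (n - 1) * (f t - f s) := by
    have h1 : (∫ t in (0 : ℝ)..s, t ^ (n - 1) * (f t - f s))
        = (∫ t in (0 : ℝ)..s, t ^ (n - 1) * f t)
          - ∫ t in (0 : ℝ)..s, t ^ (n - 1) * f s := by
      rw [← intervalIntegral.integral_sub (hcont2.intervalIntegrable _ _)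
        ((show Continuous fun t : ℝ => t ^ (n - 1) * f s from (continuous_pow _).mul continuous_const).intervalIntegrable _ _)]
      congr 1
      ext t
      ring
    have h2 : (∫ t in (0 : ℝ)..s, t ^ (n - 1) * f s) = (s ^ n / n) * f s := by
      rw [intervalIntegral.integral_mul_const, hpow 0 s, zero_pow hn0]
      ring
    unfold momentOp
    rw [h1, h2]
    field_simp
  -- split the integral
  have hsplit : (∫ t in (0 : ℝ)..s, t ^ (n - 1) * (f t - f s))
      = (∫ t in (0 : ℝ)..c, t ^ (n - 1) * (f t - f s))
        + ∫ t in c..s, t ^ (n - 1) * (f t - f s) :=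
    (intervalIntegral.integral_add_adjacent_intervals (hcont1.intervalIntegrable _ _)
      (hcont1.intervalIntegrable _ _)).symm
  -- bound the far part
  have hb1 : |∫ t in (0 : ℝ)..c, t ^ (n - 1) * (f t - f s)| ≤ 2 * M * c ^ n / n := by
    have h := intervalIntegral.norm_integral_le_abs_of_norm_le
      (μ := volume) (a := (0 : ℝ)) (b := c)
      (f := fun t => t ^ (n - 1) * (f t - f s)) (g := fun t => t ^ (n - 1) * (2 * M))
      ?_ (((continuous_pow _).mul continuous_const).intervalIntegrable _ _)
    · have hval : (∫ t in (0 : ℝ)..c, t ^ (n - 1) * (2 * M)) = 2 * M * c ^ n / n := by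
        rw [intervalIntegral.integral_mul_const, hpow 0 c, zero_pow hn0]
        ring
      rw [hval] at h
      calc |∫ t in (0 : ℝ)..c, t ^ (n - 1) * (f t - f s)| ≤ |2 * M * c ^ n / n| := h
        _ = 2 * M * c ^ n / n := abs_of_nonneg (by positivity)
    · refine (MeasureTheory.ae_restrict_iff' measurableSet_uIoc).mpr ?_
      filter_upwards with t ht
      have ht' : 0 < t := (Set.uIoc_of_le hc0 ▸ ht).1
      have htp : 0 ≤ t ^ (n - 1) := by positivity
      rw [Real.norm_eq_abs, abs_mul, abs_of_nonneg htp]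
      have : |f t - f s| ≤ 2 * M := by
        calc |f t - f s| ≤ |f t| + |f s| := abs_sub _ _
          _ ≤ M + M := add_le_add (hM t) (hM s)
          _ = 2 * M := by ring
      exact mul_le_mul_of_nonneg_left this htp
  -- bound the near part
  have hb2 : |∫ t in c..s, t ^ (n - 1) * (f t - f s)| ≤ ε * (s ^ n - c ^ n) / n := by
    have h := intervalIntegral.norm_integral_le_abs_of_norm_le
      (μ := volume) (a := c) (b := s)
      (f := fun t => t ^ (n - 1) * (f t - f s)) (g := fun t => t ^ (n - 1) * ε)
      ?_ (((continuous_pow _).mul continuous_const).intervalIntegrable _ _)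
    · have hval : (∫ t in c..s, t ^ (n - 1) * ε) = ε * (s ^ n - c ^ n) / n := by
        rw [intervalIntegral.integral_mul_const, hpow c s]
        ring
      rw [hval] at h
      have hcn : c ^ n ≤ s ^ n := pow_le_pow_left₀ hc0 hcs n
      calc |∫ t in c..s, t ^ (n - 1) * (f t - f s)| ≤ |ε * (s ^ n - c ^ n) / n| := h
        _ = ε * (s ^ n - c ^ n) / n := abs_of_nonneg (by
            apply div_nonneg (mul_nonneg hε (by linarith)) hn'.le)
    · refine (MeasureTheory.ae_restrict_iff' measurableSet_uIoc).mpr ?_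
      filter_upwards with t ht
      have ht' := (Set.uIoc_of_le hcs ▸ ht)
      have ht0 : 0 ≤ t := le_trans hc0 ht'.1.le
      have htp : 0 ≤ t ^ (n - 1) := pow_nonneg ht0 _
      rw [Real.norm_eq_abs, abs_mul, abs_of_nonneg htp]
      exact mul_le_mul_of_nonneg_left (hnear t ⟨ht'.1.le, ht'.2⟩) htp
  -- combine
  have hcn : c ^ n = (1 - η) ^ n * s ^ n := by rw [hc, mul_pow]
  have hq0 : (0 : ℝ) ≤ (1 - η) ^ n := pow_nonneg (by linarith) n
  calc |momentOp n f s - f s|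
      = ((n : ℝ) / s ^ n) * |(∫ t in (0 : ℝ)..c, t ^ (n - 1) * (f t - f s))
        + ∫ t in c..s, t ^ (n - 1) * (f t - f s)| := by
        rw [hId, hsplit, abs_mul, abs_of_pos (div_pos hn' hsn)]
    _ ≤ ((n : ℝ) / s ^ n) * (2 * M * c ^ n / n + ε * (s ^ n - c ^ n) / n) := by
        apply mul_le_mul_of_nonneg_left _ (div_pos hn' hsn).le
        exact le_trans (abs_add_le _ _) (add_le_add hb1 hb2)
    _ = 2 * M * (1 - η) ^ n + ε * (1 - (1 - η) ^ n) := by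
        rw [hcn]; field_simp
    _ ≤ 2 * M * (1 - η) ^ n + ε := by nlinarith

/-- If `0 < a < b` and `f` is continuous and vanishes outside `[a,b]`, then `(T_n f)` converges
to `f` uniformly on `(0,∞)`. -/
theorem momentOp_tendstoUniformly
    (a b : ℝ) (ha : 0 < a) (hab : a < b)
    (f : ℝ → ℝ) (hcont : Continuous f)
    (hsupp : ∀ t : ℝ, t ∉ Set.Icc a b → f t = 0) :
    TendstoUniformlyOn (fun n s => momentOp n f s) f atTop (Set.Ioi (0 : ℝ)) := by
  have hb0 : 0 < b := ha.trans hab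
  -- boundedness
  obtain ⟨C, hC⟩ := isCompact_Icc.exists_bound_of_continuousOn
    (s := Set.Icc a b) hcont.continuousOn
  set M : ℝ := max C 0 with hMdef
  have hM0 : 0 ≤ M := le_max_right _ _
  have hM : ∀ t, |f t| ≤ M := by
    intro t
    by_cases ht : t ∈ Set.Icc a b
    · exact le_trans (hC t ht) (le_max_left _ _)
    · rw [hsupp t ht]; simpa using hM0
  -- uniform continuity
  have hcsupp : HasCompactSupport f := HasCompactSupport.intro isCompact_Icc hsupp
  have huc : UniformContinuous f :=
    hcont.uniformContinuous_of_tendsto_cocompact hcsupp.is_zero_at_infty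
  rw [Metric.tendstoUniformlyOn_iff]
  intro ε hε
  obtain ⟨δ, hδ0, hδ⟩ := Metric.uniformContinuous_iff.mp huc (ε / 2) (half_pos hε)
  set η : ℝ := min (1 / 2) (δ / (4 * b)) with hηdef
  have hη0 : 0 < η := lt_min (by norm_num) (by positivity)
  have hη2 : η ≤ 1 / 2 := min_le_left _ _
  have hηb : η ≤ δ / (4 * b) := min_le_right _ _
  -- the near estimate
  have hnear : ∀ s : ℝ, 0 < s → ∀ t ∈ Set.Icc ((1 - η) * s) s, |f t - f s| ≤ ε / 2 := by
    intro s hs t ht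
    by_cases hsb : s ≤ 2 * b
    · have hdist : dist t s < δ := by
        rw [Real.dist_eq, abs_of_nonpos (by linarith [ht.2])]
        have h1 : (1 - η) * s ≤ t := ht.1
        have : η * s ≤ η * (2 * b) := mul_le_mul_of_nonneg_left hsb hη0.le
        have h2 : η * (2 * b) ≤ δ / (4 * b) * (2 * b) :=
          mul_le_mul_of_nonneg_right hηb (by positivity)
        have h3 : δ / (4 * b) * (2 * b) = δ / 2 := by
          field_simp
          ring
        nlinarith
      have := hδ hdist
      rw [Real.dist_eq] at this
      linarith
    · push_neg at hsb
      have ht1 : (1 - η) * s ≤ t := ht.1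
      have htb : b < t := by nlinarith
      have hsb' : b < s := by linarith
      rw [hsupp t (by simp [Set.mem_Icc]; intro; linarith),
        hsupp s (by simp [Set.mem_Icc]; intro; linarith)]
      simp
      positivity
  -- the tail estimate
  have hq0 : (0 : ℝ) ≤ 1 - η := by linarith
  have hq1 : (1 : ℝ) - η < 1 := by linarith
  have htend : Tendsto (fun n : ℕ => 2 * M * (1 - η) ^ n) atTop (nhds 0) := by
    have := tendsto_pow_atTop_nhds_zero_of_lt_one hq0 hq1
    simpa using this.const_mul (2 * M)
  filter_upwards [htend.eventually_lt_const (half_pos hε), eventually_ge_atTop 1]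
    with n hn1 hn2 s hs
  have hs' : (0 : ℝ) < s := hs
  have key := momentOp_key_bound n hn2 f hcont s hs' M (ε / 2) η hM
    (half_pos hε).le hη0 (by linarith) (hnear s hs')
  rw [Real.dist_eq, abs_sub_comm]
  calc |momentOp n f s - f s| ≤ 2 * M * (1 - η) ^ n + ε / 2 := key
    _ < ε / 2 + ε / 2 := by linarith
    _ = ε := by ring
end

section
/- Let 1 < a < b be reals and let f : ℝ → ℝ be a continuous function vanishing outside [a,b]. Then lim_{n→∞} ∫₀^{+∞} |T_n f(s) − f(s)| ds = 0. -/
open MeasureTheory Filter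
open intervalIntegral

lemma aux_integral_pow {n : ℕ} (hn : n ≠ 0) (s : ℝ) :
    ∫ t in (0:ℝ)..s, t ^ (n-1) = s ^ n / n := by
  rw [integral_pow]
  have h : n - 1 + 1 = n := Nat.succ_pred_eq_of_ne_zero hn
  rw [h, zero_pow hn, sub_zero]
  norm_num [Nat.cast_pred (Nat.pos_of_ne_zero hn)]

lemma momentOp_sub_self (f : ℝ → ℝ) (hcont : Continuous f) {n : ℕ} (hn : n ≠ 0)
    {s : ℝ} (hs : 0 < s) :
    momentOp n f s - f s = ((n:ℝ)/s^n) * ∫ t in (0:ℝ)..s, t^(n-1) * (f t - f s) := by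
  have h1 : ∫ t in (0:ℝ)..s, t^(n-1) * (f t - f s)
      = (∫ t in (0:ℝ)..s, t^(n-1) * f t) - (∫ t in (0:ℝ)..s, t^(n-1)) * f s := by
    rw [← intervalIntegral.integral_mul_const]
    rw [← intervalIntegral.integral_sub]
    · congr 1; ext t; ring
    · exact (Continuous.mul (continuous_pow _) hcont).intervalIntegrable _ _
    · exact ((continuous_pow _).mul continuous_const).intervalIntegrable _ _
  rw [h1, aux_integral_pow hn, mul_sub, momentOp]
  have hsn : (s:ℝ)^n ≠ 0 := pow_ne_zero _ hs.ne'
  have hnn : (n:ℝ) ≠ 0 := Nat.cast_ne_zero.mpr hn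
  field_simp

lemma key_est (f : ℝ → ℝ) (hcont : Continuous f) {M : ℝ} (hM0 : 0 ≤ M)
    (hM : ∀ t, |f t| ≤ M) {n : ℕ} (hn : n ≠ 0) {s c : ℝ} (hc0 : 0 ≤ c) (hcs : c ≤ s)
    (hs : 0 < s) {ε : ℝ} (hε : 0 ≤ ε) (hδ : ∀ t, c ≤ t → t ≤ s → |f t - f s| ≤ ε) :
    |momentOp n f s - f s| ≤ 2*M*(c/s)^n + ε := by
  have hcf : ∀ k : ℕ, Continuous (fun t : ℝ => t^k * (f t - f s)) :=
    fun k => (continuous_pow k).mul (hcont.sub continuous_const)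
  have hca : Continuous (fun t : ℝ => |t^(n-1) * (f t - f s)|) := (hcf _).abs
  rw [momentOp_sub_self f hcont hn hs, abs_mul]
  have hsn : (0:ℝ) < s^n := pow_pos hs n
  have hnn : (0:ℝ) < n := Nat.cast_pos.mpr (Nat.pos_of_ne_zero hn)
  have h1 : |∫ t in (0:ℝ)..s, t^(n-1) * (f t - f s)|
      ≤ ∫ t in (0:ℝ)..s, |t^(n-1) * (f t - f s)| :=
    abs_integral_le_integral_abs hs.le
  have hsplit : ∫ t in (0:ℝ)..s, |t^(n-1) * (f t - f s)|
      = (∫ t in (0:ℝ)..c, |t^(n-1) * (f t - f s)|)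
        + ∫ t in c..s, |t^(n-1) * (f t - f s)| :=
    (integral_add_adjacent_intervals (hca.intervalIntegrable _ _)
      (hca.intervalIntegrable _ _)).symm
  have h2 : ∫ t in (0:ℝ)..c, |t^(n-1) * (f t - f s)| ≤ ∫ t in (0:ℝ)..c, t^(n-1) * (2*M) := by
    apply integral_mono_on hc0 (hca.intervalIntegrable _ _)
      (((continuous_pow _).mul continuous_const).intervalIntegrable _ _)
    intro t ht
    rw [abs_mul, abs_pow, abs_of_nonneg ht.1]
    have hb : |f t - f s| ≤ 2*M := by
      have := abs_sub (f t) (f s)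
      have := hM t; have := hM s; linarith [abs_sub (f t) (f s)]
    exact mul_le_mul_of_nonneg_left hb (pow_nonneg ht.1 _)
  have h3 : ∫ t in c..s, |t^(n-1) * (f t - f s)| ≤ ∫ t in c..s, t^(n-1) * ε := by
    apply integral_mono_on hcs (hca.intervalIntegrable _ _)
      (((continuous_pow _).mul continuous_const).intervalIntegrable _ _)
    intro t ht
    rw [abs_mul, abs_pow, abs_of_nonneg (hc0.trans ht.1)]
    exact mul_le_mul_of_nonneg_left (hδ t ht.1 ht.2) (pow_nonneg (hc0.trans ht.1) _)
  have e2 : ∫ t in (0:ℝ)..c, t^(n-1) * (2*M) = (c^n/n) * (2*M) := by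
    rw [intervalIntegral.integral_mul_const, aux_integral_pow hn]
  have e3 : ∫ t in c..s, t^(n-1) * ε = (s^n/n - c^n/n) * ε := by
    rw [intervalIntegral.integral_mul_const]
    have := integral_add_adjacent_intervals
      ((continuous_pow (n-1)).intervalIntegrable (μ := volume) 0 c)
      ((continuous_pow (n-1)).intervalIntegrable (μ := volume) c s)
    rw [aux_integral_pow hn, aux_integral_pow hn] at this
    have : ∫ t in c..s, t^(n-1) = s^n/n - c^n/n := by linarith
    rw [this]
  have hcn : (0:ℝ) ≤ c^n := pow_nonneg hc0 n
  have hcns : c^n ≤ s^n := pow_le_pow_left₀ hc0 hcs n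
  calc |(n:ℝ)/s^n| * |∫ t in (0:ℝ)..s, t^(n-1) * (f t - f s)|
      ≤ ((n:ℝ)/s^n) * ((c^n/n) * (2*M) + (s^n/n - c^n/n) * ε) := by
        rw [abs_of_nonneg (by positivity)]
        apply mul_le_mul_of_nonneg_left _ (by positivity)
        calc _ ≤ _ := h1
          _ = _ := hsplit
          _ ≤ _ := add_le_add h2 h3
          _ = _ := by rw [e2, e3]
    _ ≤ 2*M*(c/s)^n + ε := by
        rw [div_pow]
        have : ((n:ℝ)/s^n) * ((c^n/n) * (2*M) + (s^n/n - c^n/n) * ε)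
            = 2*M*(c^n/s^n) + ε * (1 - c^n/s^n) := by
          field_simp
        rw [this]
        have h4 : c^n/s^n ≤ 1 := by rw [div_le_one hsn]; exact hcns
        nlinarith [mul_nonneg hε (div_nonneg hcn hsn.le)]

lemma momentOp_abs_le (f : ℝ → ℝ) (hcont : Continuous f) {M : ℝ} (hM0 : 0 ≤ M)
    (hM : ∀ t, |f t| ≤ M) (n : ℕ) {s : ℝ} (hs : 0 < s) :
    |momentOp n f s| ≤ M := by
  rcases eq_or_ne n 0 with rfl | hn
  · simp [momentOp, hM0]
  have hsn : (0:ℝ) < s^n := pow_pos hs n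
  have hnn : (0:ℝ) < n := Nat.cast_pos.mpr (Nat.pos_of_ne_zero hn)
  rw [momentOp, abs_mul, abs_of_nonneg (by positivity : (0:ℝ) ≤ (n:ℝ)/s^n)]
  have h1 : |∫ t in (0:ℝ)..s, t^(n-1) * f t| ≤ ∫ t in (0:ℝ)..s, |t^(n-1) * f t| :=
    abs_integral_le_integral_abs hs.le
  have h2 : ∫ t in (0:ℝ)..s, |t^(n-1) * f t| ≤ ∫ t in (0:ℝ)..s, t^(n-1) * M := by
    apply integral_mono_on hs.le
      (((continuous_pow _).mul hcont).abs.intervalIntegrable _ _)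
      (((continuous_pow _).mul continuous_const).intervalIntegrable _ _)
    intro t ht
    show |t^(n-1) * f t| ≤ t^(n-1) * M
    rw [abs_mul, abs_pow, abs_of_nonneg ht.1]
    exact mul_le_mul_of_nonneg_left (hM t) (pow_nonneg ht.1 _)
  have e : ∫ t in (0:ℝ)..s, t^(n-1) * M = s^n/n * M := by
    rw [intervalIntegral.integral_mul_const, aux_integral_pow hn]
  calc (n:ℝ)/s^n * |∫ t in (0:ℝ)..s, t^(n-1) * f t|
      ≤ (n:ℝ)/s^n * (s^n/n * M) :=
        mul_le_mul_of_nonneg_left (h1.trans (h2.trans_eq e)) (by positivity)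
    _ = M := by field_simp

lemma momentOp_tendsto (f : ℝ → ℝ) (hcont : Continuous f) {M : ℝ} (hM0 : 0 ≤ M)
    (hM : ∀ t, |f t| ≤ M) {s : ℝ} (hs : 0 < s) :
    Tendsto (fun n : ℕ => momentOp n f s) atTop (nhds (f s)) := by
  rw [Metric.tendsto_atTop]
  intro ε hε
  obtain ⟨δ, hδ0, hδ⟩ := Metric.continuous_iff.mp hcont s (ε/4) (by linarith)
  set c : ℝ := max (s - δ/2) 0 with hc
  have hc0 : 0 ≤ c := le_max_right _ _
  have hcs : c < s := by
    rw [hc, max_lt_iff]; exact ⟨by linarith, hs⟩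
  have hr : c/s < 1 := (div_lt_one hs).mpr hcs
  have hr0 : 0 ≤ c/s := div_nonneg hc0 hs.le
  have hlim : Tendsto (fun n : ℕ => 2*M*(c/s)^n) atTop (nhds 0) := by
    simpa using (tendsto_pow_atTop_nhds_zero_of_lt_one hr0 hr).const_mul (2*M)
  have hev : ∀ᶠ n : ℕ in atTop, 2*M*(c/s)^n < ε/2 :=
    (hlim.eventually (eventually_lt_nhds (by linarith : (0:ℝ) < ε/2)))
  obtain ⟨N, hN⟩ := (hev.and (eventually_ne_atTop 0)).exists_forall_of_atTop
  refine ⟨N, fun n hn => ?_⟩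
  obtain ⟨h1, h2⟩ := hN n hn
  rw [Real.dist_eq]
  have key := key_est f hcont hM0 hM h2 hc0 hcs.le hs (by linarith : (0:ℝ) ≤ ε/4)
    (fun t htc hts => ?_)
  · linarith
  · apply le_of_lt
    have : dist t s < δ := by
      rw [Real.dist_eq, abs_of_nonpos (by linarith)]
      have : s - δ/2 ≤ c := le_max_left _ _
      linarith
    have h := hδ t this
    rwa [Real.dist_eq] at h

lemma momentOp_continuousOn (n : ℕ) (f : ℝ → ℝ) (hcont : Continuous f) :
    ContinuousOn (momentOp n f) {s : ℝ | s ≠ 0} := by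
  have hF : Continuous (fun s : ℝ => ∫ t in (0:ℝ)..s, t^(n-1) * f t) :=
    intervalIntegral.continuous_primitive
      (fun u v => (((continuous_pow _).mul hcont)).intervalIntegrable u v) 0
  exact (continuousOn_const.div (continuous_pow n).continuousOn
    (fun s hs => pow_ne_zero _ hs)).mul hF.continuousOn

lemma momentOp_eq_of_gt (n : ℕ) (f : ℝ → ℝ) (hcont : Continuous f) {a b s : ℝ} (hb0 : 0 < b)
    (hsupp : ∀ t : ℝ, t ∉ Set.Icc a b → f t = 0) (hbs : b < s) :
    momentOp n f s = ((n:ℝ) * ∫ t in (0:ℝ)..b, t^(n-1) * f t) / s ^ n := by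
  have hz : ∫ t in b..s, t^(n-1) * f t = 0 := by
    rw [intervalIntegral.integral_of_le hbs.le]
    apply setIntegral_eq_zero_of_forall_eq_zero
    intro t ht
    rw [hsupp t (fun h => absurd h.2 (not_le.mpr ht.1)), mul_zero]
  have hcf : Continuous (fun t : ℝ => t^(n-1) * f t) := (continuous_pow _).mul hcont
  have hsplit := integral_add_adjacent_intervals
    (hcf.intervalIntegrable (μ := volume) 0 b) (hcf.intervalIntegrable (μ := volume) b s)
  rw [momentOp]
  rw [← hsplit, hz, add_zero]
  ring

lemma tail_est (f : ℝ → ℝ) (hcont : Continuous f) {M a b : ℝ} (hM0 : 0 ≤ M)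
    (hM : ∀ t, |f t| ≤ M) (hb0 : 0 < b)
    (hsupp : ∀ t : ℝ, t ∉ Set.Icc a b → f t = 0)
    {n : ℕ} (hn : 2 ≤ n) :
    IntegrableOn (fun s : ℝ => |momentOp n f s - f s|) (Set.Ioi b) ∧
    (∫ s in Set.Ioi b, |momentOp n f s - f s|) ≤ M * b / ((n:ℝ) - 1) := by
  set c : ℝ := (n:ℝ) * ∫ t in (0:ℝ)..b, t^(n-1) * f t with hc
  have hcb : |c| ≤ M * b ^ n := by
    have h1 : c = b ^ n * momentOp n f b := by
      rw [momentOp, hc]; field_simp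
    rw [h1, abs_mul, abs_pow, abs_of_pos hb0, mul_comm M (b^n)]
    exact mul_le_mul_of_nonneg_left (momentOp_abs_le f hcont hM0 hM n hb0) (by positivity)
  have hr : -(n:ℝ) < -1 := by
    have : (2:ℝ) ≤ n := by exact_mod_cast hn
    linarith
  have heq : Set.EqOn (fun s : ℝ => |momentOp n f s - f s|)
      (fun s : ℝ => |c| * s ^ (-(n:ℝ))) (Set.Ioi b) := by
    intro s hs
    have hbs : b < s := hs
    have hs0 : 0 < s := hb0.trans hbs
    have hf0 : f s = 0 := hsupp s (fun h => absurd h.2 (not_le.mpr hbs))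
    simp only
    rw [momentOp_eq_of_gt n f hcont hb0 hsupp hbs, hf0, sub_zero, abs_div, abs_pow,
      abs_of_pos hs0, Real.rpow_neg hs0.le, Real.rpow_natCast, div_eq_mul_inv]
  have hint : IntegrableOn (fun s : ℝ => |c| * s ^ (-(n:ℝ))) (Set.Ioi b) :=
    (integrableOn_Ioi_rpow_of_lt hr hb0).const_mul _
  refine ⟨hint.congr_fun heq.symm measurableSet_Ioi, ?_⟩
  rw [setIntegral_congr_fun measurableSet_Ioi heq]
  rw [MeasureTheory.integral_const_mul, integral_Ioi_rpow_of_lt hr hb0]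
  have h2n : (2:ℝ) ≤ (n:ℝ) := by exact_mod_cast hn
  have hval : -b ^ (-(n:ℝ) + 1) / (-(n:ℝ) + 1) = b ^ ((1:ℝ) - n) / ((n:ℝ) - 1) := by
    have e1 : (1:ℝ) - (n:ℝ) = -(n:ℝ) + 1 := by ring
    rw [e1, neg_div, ← div_neg]
    congr 1
    ring
  rw [hval]
  have hb1 : (0:ℝ) < b ^ ((1:ℝ) - n) := Real.rpow_pos_of_pos hb0 _
  have key : |c| * b ^ ((1:ℝ) - n) ≤ M * b := by
    calc |c| * b ^ ((1:ℝ) - n) ≤ M * b ^ n * b ^ ((1:ℝ) - n) :=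
          mul_le_mul_of_nonneg_right hcb hb1.le
      _ = M * b := by
          rw [mul_assoc, ← Real.rpow_natCast b n, ← Real.rpow_add hb0]
          norm_num
  have hd : (0:ℝ) < (n:ℝ) - 1 := by linarith
  rw [← mul_div_assoc, div_le_div_iff₀ hd hd]
  nlinarith


/-- If `1 < a < b` and `f` is continuous and vanishes outside `[a,b]`, then
`∫₀^∞ |T_n f(s) − f(s)| ds → 0` as `n → ∞`. -/
theorem momentOp_L1_convergence
    (a b : ℝ) (ha : 1 < a) (hab : a < b)
    (f : ℝ → ℝ) (hcont : Continuous f)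
    (hsupp : ∀ t : ℝ, t ∉ Set.Icc a b → f t = 0) :
    Tendsto (fun n : ℕ => ∫ s in Set.Ioi (0 : ℝ), |momentOp n f s - f s|)
      atTop (nhds 0) := by
  -- get a uniform bound M on |f|
  obtain ⟨M0, hM0b⟩ := (isCompact_Icc (a := a) (b := b)).exists_bound_of_continuousOn
    hcont.continuousOn
  set M : ℝ := max M0 0 with hMdef
  have hM0 : 0 ≤ M := le_max_right _ _
  have hM : ∀ t, |f t| ≤ M := by
    intro t
    by_cases ht : t ∈ Set.Icc a b
    · exact (hM0b t ht).trans (le_max_left _ _)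
    · rw [hsupp t ht, abs_zero]; exact hM0
  have hb0 : (0:ℝ) < b := by linarith
  set g : ℕ → ℝ → ℝ := fun n s => |momentOp n f s - f s| with hg
  -- measurability on positive reals
  have hmeas : ∀ n, ∀ (S : Set ℝ), MeasurableSet S → S ⊆ Set.Ioi 0 →
      AEStronglyMeasurable (g n) (volume.restrict S) := by
    intro n S hSm hSsub
    apply ContinuousOn.aestronglyMeasurable _ hSm
    apply ContinuousOn.abs
    apply ContinuousOn.sub _ (hcont.continuousOn)
    exact (momentOp_continuousOn n f hcont).mono
      (fun s hs => (ne_of_gt (hSsub hs)))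
  -- Part 1 : Ioc 0 b, by dominated convergence
  have h1 : Tendsto (fun n : ℕ => ∫ s in Set.Ioc (0:ℝ) b, g n s) atTop (nhds 0) := by
    have := MeasureTheory.tendsto_integral_of_dominated_convergence
      (F := fun n s => g n s) (f := fun _ => (0:ℝ)) (bound := fun _ => 2*M)
      (μ := volume.restrict (Set.Ioc (0:ℝ) b))
      (fun n => hmeas n _ measurableSet_Ioc Set.Ioc_subset_Ioi_self)
      (integrableOn_const measure_Ioc_lt_top.ne)
      ?_ ?_
    · simpa using this
    · intro n
      rw [ae_restrict_iff' measurableSet_Ioc]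
      filter_upwards with s hs
      have h1 := momentOp_abs_le f hcont hM0 hM n hs.1
      have h2 := hM s
      have : |momentOp n f s - f s| ≤ 2*M := by
        have := abs_sub (momentOp n f s) (f s)
        linarith
      simpa [hg, abs_abs] using this
    · rw [ae_restrict_iff' measurableSet_Ioc]
      filter_upwards with s hs
      have := (momentOp_tendsto f hcont hM0 hM hs.1).sub
        (tendsto_const_nhds (x := f s))
      rw [sub_self] at this
      simpa [hg] using this.abs
  -- Part 2 : Ioi b, tail estimate
  have h2 : Tendsto (fun n : ℕ => ∫ s in Set.Ioi b, g n s) atTop (nhds 0) := by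
    apply squeeze_zero' (Eventually.of_forall fun n =>
      integral_nonneg fun s => abs_nonneg _)
    · filter_upwards [eventually_ge_atTop 2] with n hn
      exact (tail_est f hcont hM0 hM hb0 hsupp hn).2
    · have hden : Tendsto (fun n : ℕ => ((n:ℝ) - 1)) atTop atTop :=
        tendsto_atTop_add_const_right _ (-1) tendsto_natCast_atTop_atTop
      simpa using (tendsto_const_nhds (x := M * b)).div_atTop hden
  -- combine
  have hsplit : ∀ᶠ n : ℕ in atTop,
      (∫ s in Set.Ioi (0:ℝ), g n s)
        = (∫ s in Set.Ioc (0:ℝ) b, g n s) + ∫ s in Set.Ioi b, g n s := by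
    filter_upwards [eventually_ge_atTop 2] with n hn
    have hIoc : IntegrableOn (g n) (Set.Ioc (0:ℝ) b) := by
      apply Integrable.mono' (integrableOn_const (C := 2*M) measure_Ioc_lt_top.ne)
        (hmeas n _ measurableSet_Ioc Set.Ioc_subset_Ioi_self)
      rw [ae_restrict_iff' measurableSet_Ioc]
      filter_upwards with s hs
      have h1 := momentOp_abs_le f hcont hM0 hM n hs.1
      have h2 := hM s
      have := abs_sub (momentOp n f s) (f s)
      simp only [hg, Real.norm_eq_abs, abs_abs]
      linarith
    have hIoi : IntegrableOn (g n) (Set.Ioi b) :=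
      (tail_est f hcont hM0 hM hb0 hsupp hn).1
    rw [← Set.Ioc_union_Ioi_eq_Ioi hb0.le,
      setIntegral_union (Set.Ioc_disjoint_Ioi le_rfl) measurableSet_Ioi hIoc hIoi]
  have := (h1.add h2)
  rw [add_zero] at this
  exact Tendsto.congr' (hsplit.mono fun n h => h.symm) this
end

section
/- Let 1 < a < T be reals, let f : ℝ → ℝ be a continuous function vanishing outside [a,T], and let w : ℝ → ℝ be continuously differentiable with compact support contained in [0,∞). Then lim_{n→∞} ∫₀^{+∞} T_n f(s)·w′(s) ds = ∫₀^{+∞} f(s)·w′(s) ds, and moreover lim_{n→∞} ∫₀^{+∞} w(s)·(T_n f)′(s) ds = −∫₀^{+∞} f(s)·w′(s) ds. -/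
open MeasureTheory Filter

open Topology

/-- The derivative of `momentOp n f` (valid at `s ≠ 0`). -/
noncomputable def momentOpD (n : ℕ) (f : ℝ → ℝ) (s : ℝ) : ℝ :=
  ((0 * s ^ n - (n:ℝ) * ((n:ℝ) * s ^ (n - 1))) / (s ^ n) ^ 2)
      * (∫ t in (0 : ℝ)..s, t ^ (n - 1) * f t)
    + ((n : ℝ) / s ^ n) * (s ^ (n - 1) * f s)

lemma abs_momentOp_le {f : ℝ → ℝ} (hcont : Continuous f) {C : ℝ}
    (hC : ∀ t, |f t| ≤ C) {s : ℝ} (hs : 0 < s) (n : ℕ) : |momentOp n f s| ≤ C := by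
  have hC0 : 0 ≤ C := le_trans (abs_nonneg _) (hC 0)
  rcases Nat.eq_zero_or_pos n with h | h
  · subst h; simpa [momentOp] using hC0
  have hn1 : 1 ≤ n := h
  have hnz : n ≠ 0 := by omega
  have hnR : (0:ℝ) < n := by exact_mod_cast h
  have hsn : (0:ℝ) < s ^ n := pow_pos hs n
  have hcast : ((n - 1 : ℕ) : ℝ) + 1 = (n : ℝ) := by
    rw [Nat.cast_sub hn1]; push_cast; ring
  have hexp : n - 1 + 1 = n := Nat.sub_add_cancel hn1
  have hconst : (∫ t in (0:ℝ)..s, t ^ (n-1) * C) = s ^ n / n * C := by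
    rw [intervalIntegral.integral_mul_const, integral_pow, hexp, hcast, zero_pow hnz, sub_zero]
  have h1 : ‖∫ t in (0:ℝ)..s, t ^ (n-1) * f t‖ ≤ |∫ t in (0:ℝ)..s, t ^ (n-1) * C| := by
    apply intervalIntegral.norm_integral_le_abs_of_norm_le
    · filter_upwards [ae_restrict_mem measurableSet_uIoc] with t ht
      rw [Set.uIoc_of_le hs.le] at ht
      rw [Real.norm_eq_abs, abs_mul, abs_pow, abs_of_nonneg ht.1.le]
      exact mul_le_mul_of_nonneg_left (hC t) (pow_nonneg ht.1.le _)
    · exact ((continuous_pow _).mul continuous_const).intervalIntegrable _ _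
  rw [hconst, abs_of_nonneg (by positivity)] at h1
  rw [Real.norm_eq_abs] at h1
  have : |momentOp n f s| ≤ ((n:ℝ) / s ^ n) * (s ^ n / n * C) := by
    rw [momentOp, abs_mul, abs_of_nonneg (by positivity : (0:ℝ) ≤ (n:ℝ) / s ^ n)]
    exact mul_le_mul_of_nonneg_left h1 (by positivity)
  calc |momentOp n f s| ≤ ((n:ℝ) / s ^ n) * (s ^ n / n * C) := this
    _ = C := by field_simp

lemma hasDerivAt_momentOp {f : ℝ → ℝ} (hcont : Continuous f) {s : ℝ} (hs : 0 < s) (n : ℕ) :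
    HasDerivAt (momentOp n f) (momentOpD n f s) s := by
  have hI : HasDerivAt (fun u => ∫ t in (0:ℝ)..u, t ^ (n-1) * f t) (s ^ (n-1) * f s) s :=
    intervalIntegral.integral_hasDerivAt_right
      (((continuous_pow _).mul hcont).intervalIntegrable _ _)
      (((continuous_pow _).mul hcont).stronglyMeasurableAtFilter _ _)
      (((continuous_pow _).mul hcont).continuousAt)
  have hc : HasDerivAt (fun x : ℝ => (n:ℝ) / x ^ n)
      ((0 * s ^ n - (n:ℝ) * ((n:ℝ) * s ^ (n - 1))) / (s ^ n) ^ 2) s := by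
    exact (hasDerivAt_const s (n:ℝ)).div (hasDerivAt_pow n s) (pow_ne_zero n hs.ne')
  exact hc.mul hI

lemma continuous_primitive_mom {f : ℝ → ℝ} (hcont : Continuous f) (n : ℕ) :
    Continuous (fun s : ℝ => ∫ t in (0:ℝ)..s, t ^ (n-1) * f t) :=
  intervalIntegral.continuous_primitive
    (fun _ _ => ((continuous_pow _).mul hcont).intervalIntegrable _ _) 0

lemma continuousOn_momentOp {f : ℝ → ℝ} (hcont : Continuous f) (n : ℕ) :
    ContinuousOn (momentOp n f) (Set.Ioi 0) := by
  apply ContinuousOn.mul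
  · exact continuousOn_const.div (continuousOn_pow n)
      (fun x hx => pow_ne_zero n (ne_of_gt hx))
  · exact (continuous_primitive_mom hcont n).continuousOn

lemma continuousOn_momentOpD {f : ℝ → ℝ} (hcont : Continuous f) (n : ℕ) :
    ContinuousOn (momentOpD n f) (Set.Ioi 0) := by
  apply ContinuousOn.add
  · apply ContinuousOn.mul
    · exact (ContinuousOn.div (by fun_prop) (by fun_prop)
        (fun x hx => pow_ne_zero 2 (pow_ne_zero n (ne_of_gt hx))))
    · exact (continuous_primitive_mom hcont n).continuousOn
  · apply ContinuousOn.mul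
    · exact continuousOn_const.div (continuousOn_pow n)
        (fun x hx => pow_ne_zero n (ne_of_gt hx))
    · fun_prop

lemma tendsto_momentOp_apply {f : ℝ → ℝ} (hcont : Continuous f) {C : ℝ}
    (hC : ∀ t, |f t| ≤ C) {s : ℝ} (hs : 0 < s) :
    Tendsto (fun n : ℕ => momentOp n f s) atTop (𝓝 (f s)) := by
  rw [Metric.tendsto_atTop]
  intro ε hε
  obtain ⟨δ, hδ, hδ'⟩ := Metric.continuousAt_iff.mp (hcont.continuousAt (x := s)) (ε/2) (half_pos hε)
  set d : ℝ := min (δ/2) (s/2) with hd_def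
  have hd0 : 0 < d := lt_min (half_pos hδ) (half_pos hs)
  have hds : d ≤ s/2 := min_le_right _ _
  have hsd0 : 0 < s - d := by linarith
  have hsd_le : s - d ≤ s := by linarith
  set r : ℝ := (s - d)/s with hr_def
  have hr0 : 0 ≤ r := le_of_lt (div_pos hsd0 hs)
  have hr1 : r < 1 := (div_lt_one hs).mpr (by linarith)
  have hrn : Tendsto (fun n : ℕ => 2*C*r^n) atTop (𝓝 0) := by
    have := (tendsto_pow_atTop_nhds_zero_of_lt_one hr0 hr1).const_mul (2*C)
    simpa using this
  obtain ⟨N₁, hN₁⟩ := eventually_atTop.mp (hrn.eventually (gt_mem_nhds (half_pos hε)))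
  refine ⟨max N₁ 1, fun n hn => ?_⟩
  have hn1 : 1 ≤ n := le_trans (le_max_right _ _) hn
  have hnN : N₁ ≤ n := le_trans (le_max_left _ _) hn
  have hnR : (0:ℝ) < n := by exact_mod_cast hn1
  have hC0 : 0 ≤ C := le_trans (abs_nonneg _) (hC 0)
  have hnz : n ≠ 0 := by omega
  have hsn : (0:ℝ) < s^n := pow_pos hs n
  have hcast : ((n-1 : ℕ):ℝ) + 1 = (n:ℝ) := by
    rw [Nat.cast_sub hn1]; push_cast; ring
  have hexp : n - 1 + 1 = n := Nat.sub_add_cancel hn1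
  -- integrability
  have hcont_p : Continuous (fun t : ℝ => t^(n-1) * (f t - f s)) :=
    (continuous_pow _).mul (hcont.sub continuous_const)
  have int1 : IntervalIntegrable (fun t : ℝ => t^(n-1) * (f t - f s)) volume 0 (s - d) :=
    hcont_p.intervalIntegrable _ _
  have int2 : IntervalIntegrable (fun t : ℝ => t^(n-1) * (f t - f s)) volume (s - d) s :=
    hcont_p.intervalIntegrable _ _
  have intc1 : IntervalIntegrable (fun t : ℝ => t^(n-1) * (2*C)) volume 0 (s - d) :=
    ((continuous_pow _).mul continuous_const).intervalIntegrable _ _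
  have intc2 : IntervalIntegrable (fun t : ℝ => t^(n-1) * (ε/2)) volume (s - d) s :=
    ((continuous_pow _).mul continuous_const).intervalIntegrable _ _
  -- the key identity
  have epow : ∀ u v : ℝ, (∫ t in u..v, t^(n-1)) = (v^n - u^n)/n := by
    intro u v
    rw [integral_pow, hexp, hcast]
  have e2 : (∫ t in (0:ℝ)..s, t^(n-1) * f s) = s^n/n * f s := by
    rw [intervalIntegral.integral_mul_const, epow, zero_pow hnz]
    ring
  have e1 : (∫ t in (0:ℝ)..s, t^(n-1) * (f t - f s))
      = (∫ t in (0:ℝ)..s, t^(n-1) * f t) - ∫ t in (0:ℝ)..s, t^(n-1) * f s := by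
    rw [← intervalIntegral.integral_sub (f := fun t : ℝ => t^(n-1) * f t)
      (g := fun t : ℝ => t^(n-1) * f s) (((continuous_pow _).mul hcont).intervalIntegrable _ _)
      (((continuous_pow _).mul continuous_const).intervalIntegrable _ _)]
    congr 1; ext t; ring
  have key : momentOp n f s - f s = ((n:ℝ)/s^n) * ∫ t in (0:ℝ)..s, t^(n-1) * (f t - f s) := by
    rw [e1, e2, momentOp]
    field_simp
  -- split
  have hsplit : (∫ t in (0:ℝ)..s, t^(n-1) * (f t - f s))
      = (∫ t in (0:ℝ)..(s-d), t^(n-1) * (f t - f s)) + ∫ t in (s-d)..s, t^(n-1) * (f t - f s) :=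
    (intervalIntegral.integral_add_adjacent_intervals int1 int2).symm
  have bound1 : |∫ t in (0:ℝ)..(s-d), t^(n-1) * (f t - f s)| ≤ 2*C*(s-d)^n/n := by
    have h := intervalIntegral.norm_integral_le_abs_of_norm_le (μ := volume)
      (a := (0:ℝ)) (b := s - d) (f := fun t => t^(n-1) * (f t - f s))
      (g := fun t => t^(n-1) * (2*C)) ?_ intc1
    · rw [Real.norm_eq_abs] at h
      refine h.trans ?_
      have : (∫ t in (0:ℝ)..(s-d), t^(n-1) * (2*C)) = (s-d)^n/n * (2*C) := by
        rw [intervalIntegral.integral_mul_const, epow, zero_pow hnz, sub_zero]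
      rw [this, abs_of_nonneg]
      · rw [div_mul_eq_mul_div]; ring_nf; rfl
      · positivity
    · filter_upwards [ae_restrict_mem measurableSet_uIoc] with t ht
      rw [Set.uIoc_of_le (le_of_lt hsd0)] at ht
      have ht0 : 0 ≤ t := le_of_lt ht.1
      rw [Real.norm_eq_abs, abs_mul, abs_pow, abs_of_nonneg ht0]
      gcongr
      calc |f t - f s| ≤ |f t| + |f s| := abs_sub _ _
        _ ≤ 2*C := by linarith [hC t, hC s]
  have bound2 : |∫ t in (s-d)..s, t^(n-1) * (f t - f s)| ≤ (s^n - (s-d)^n)/n * (ε/2) := by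
    have h := intervalIntegral.norm_integral_le_abs_of_norm_le (μ := volume)
      (a := s - d) (b := s) (f := fun t => t^(n-1) * (f t - f s))
      (g := fun t => t^(n-1) * (ε/2)) ?_ intc2
    · rw [Real.norm_eq_abs] at h
      refine h.trans ?_
      have hmono : (s-d)^n ≤ s^n := pow_le_pow_left₀ (le_of_lt hsd0) hsd_le n
      have : (∫ t in (s-d)..s, t^(n-1) * (ε/2)) = (s^n - (s-d)^n)/n * (ε/2) := by
        rw [intervalIntegral.integral_mul_const, epow]
      rw [this, abs_of_nonneg]
      exact mul_nonneg (div_nonneg (by linarith) (le_of_lt hnR)) (by linarith)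
    · filter_upwards [ae_restrict_mem measurableSet_uIoc] with t ht
      rw [Set.uIoc_of_le hsd_le] at ht
      have ht0 : 0 ≤ t := le_of_lt (lt_of_lt_of_le hsd0 (le_of_lt ht.1))
      rw [Real.norm_eq_abs, abs_mul, abs_pow, abs_of_nonneg ht0]
      gcongr
      have : dist t s < δ := by
        rw [Real.dist_eq, abs_of_nonpos (by linarith [ht.2])]
        have : d ≤ δ/2 := min_le_left _ _
        linarith [ht.1]
      exact le_of_lt (hδ' this)
  -- combine
  rw [Real.dist_eq, key, hsplit, abs_mul, abs_of_nonneg (le_of_lt (div_pos hnR hsn))]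
  have habs : |(∫ t in (0:ℝ)..(s-d), t^(n-1) * (f t - f s)) + ∫ t in (s-d)..s, t^(n-1) * (f t - f s)|
      ≤ 2*C*(s-d)^n/n + (s^n - (s-d)^n)/n * (ε/2) :=
    (abs_add_le _ _).trans (add_le_add bound1 bound2)
  have step : ((n:ℝ)/s^n) * (2*C*(s-d)^n/n + (s^n - (s-d)^n)/n * (ε/2))
      = 2*C*r^n + (1 - r^n) * (ε/2) := by
    rw [hr_def, div_pow]
    field_simp
  have hrn_le : (0:ℝ) ≤ r^n := pow_nonneg hr0 n
  have hrn_le1 : r^n ≤ 1 := pow_le_one₀ hr0 (le_of_lt hr1)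
  calc ((n:ℝ)/s^n) * |(∫ t in (0:ℝ)..(s-d), t^(n-1) * (f t - f s)) + ∫ t in (s-d)..s, t^(n-1) * (f t - f s)|
      ≤ ((n:ℝ)/s^n) * (2*C*(s-d)^n/n + (s^n - (s-d)^n)/n * (ε/2)) :=
        mul_le_mul_of_nonneg_left habs (le_of_lt (div_pos hnR hsn))
    _ = 2*C*r^n + (1 - r^n) * (ε/2) := step
    _ ≤ 2*C*r^n + ε/2 := by nlinarith
    _ < ε/2 + ε/2 := by linarith [hN₁ n hnN]
    _ = ε := by ring

lemma momentOp_eq_zero_below {f : ℝ → ℝ} {a : ℝ} (ha : 0 ≤ a) (hf0 : ∀ t ≤ a, f t = 0)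
    {s : ℝ} (hs : s ≤ a) (n : ℕ) : momentOp n f s = 0 := by
  have : (∫ t in (0 : ℝ)..s, t ^ (n - 1) * f t) = 0 := by
    rw [intervalIntegral.integral_congr (g := fun _ => (0:ℝ))]
    · simp
    · intro t ht
      rw [Set.mem_uIcc] at ht
      have : t ≤ a := by rcases ht with ⟨_, h⟩ | ⟨_, h⟩ <;> linarith
      simp [hf0 t this]
  simp [momentOp, this]

/-- Weak convergence of the derivatives `(T_n f)′`: if `1 < a < T`, `f` is continuous and
vanishes outside `[a,T]`, and `w` is `C¹` with compact support contained in `[0,∞)`, then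
`∫₀^∞ T_n f(s) w′(s) ds → ∫₀^∞ f(s) w′(s) ds` and
`∫₀^∞ w(s) (T_n f)′(s) ds → −∫₀^∞ f(s) w′(s) ds`. -/
theorem momentOp_weak_convergence
    (a T : ℝ) (ha : 1 < a) (haT : a < T)
    (f : ℝ → ℝ) (hcont : Continuous f)
    (hsupp : ∀ t : ℝ, t ∉ Set.Icc a T → f t = 0)
    (w : ℝ → ℝ) (hw : ContDiff ℝ 1 w) (hwsupp : HasCompactSupport w)
    (hwpos : tsupport w ⊆ Set.Ici (0 : ℝ)) :
    Tendsto (fun n : ℕ => ∫ s in Set.Ioi (0 : ℝ), momentOp n f s * deriv w s)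
      atTop (nhds (∫ s in Set.Ioi (0 : ℝ), f s * deriv w s)) ∧
    Tendsto (fun n : ℕ => ∫ s in Set.Ioi (0 : ℝ), w s * deriv (momentOp n f) s)
      atTop (nhds (-∫ s in Set.Ioi (0 : ℝ), f s * deriv w s)) := by
  have hwc : Continuous w := hw.continuous
  have hw' : Continuous (deriv w) := hw.continuous_deriv le_rfl
  have hwdiff : Differentiable ℝ w := hw.differentiable one_ne_zero
  have hfc : HasCompactSupport f := HasCompactSupport.intro isCompact_Icc hsupp
  obtain ⟨C, hC⟩ := hfc.exists_bound_of_continuous hcont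
  have hCa : ∀ t, |f t| ≤ C := fun t => by simpa [Real.norm_eq_abs] using hC t
  have hC0 : 0 ≤ C := le_trans (abs_nonneg _) (hCa 0)
  have hfa : f a = 0 := by
    have h1 : Tendsto f (𝓝[<] a) (𝓝 (f a)) := (hcont.tendsto a).mono_left nhdsWithin_le_nhds
    have h2 : Tendsto f (𝓝[<] a) (𝓝 0) := by
      refine Tendsto.congr' ?_ tendsto_const_nhds
      filter_upwards [self_mem_nhdsWithin] with t ht
      exact (hsupp t (fun hmem => absurd hmem.1 (not_le.mpr ht))).symm
    exact tendsto_nhds_unique h1 h2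
  have hf0 : ∀ t ≤ a, f t = 0 := by
    intro t ht
    rcases eq_or_lt_of_le ht with rfl | h
    · exact hfa
    · exact hsupp t (fun hmem => absurd hmem.1 (not_le.mpr h))
  obtain ⟨b, hb⟩ := hwsupp.isCompact.bddAbove
  set B : ℝ := max b 1 + 1 with hB_def
  have hB1 : (1:ℝ) < B := by have := le_max_right b 1; linarith
  have hBb : b < B := by have := le_max_left b 1; linarith
  have hwB : ∀ x, B ≤ x → w x = 0 := by
    intro x hx
    apply image_eq_zero_of_notMem_tsupport
    intro hmem; exact absurd (hb hmem) (not_le.mpr (by linarith))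
  have hw'B : ∀ x, B ≤ x → deriv w x = 0 := by
    intro x hx
    by_contra hne
    have : x ∈ tsupport w := support_deriv_subset (Function.mem_support.mpr hne)
    exact absurd (hb this) (not_le.mpr (by linarith))
  have ha0 : (0:ℝ) ≤ a := by linarith
  have hg0 : ∀ (n : ℕ) (s : ℝ), s ≤ a → momentOp n f s = 0 :=
    fun n s hsa => momentOp_eq_zero_below ha0 hf0 hsa n
  have hA : Tendsto (fun n : ℕ => ∫ s in Set.Ioi (0:ℝ), momentOp n f s * deriv w s) atTop
      (𝓝 (∫ s in Set.Ioi (0:ℝ), f s * deriv w s)) := by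
    apply tendsto_integral_of_dominated_convergence (fun s => C * |deriv w s|)
    · intro n
      exact ((continuousOn_momentOp hcont n).mul hw'.continuousOn).aestronglyMeasurable
        measurableSet_Ioi
    · exact (((hw'.integrable_of_hasCompactSupport hwsupp.deriv).abs).const_mul C).restrict
    · intro n
      filter_upwards [ae_restrict_mem measurableSet_Ioi] with s hs
      rw [Real.norm_eq_abs, abs_mul]
      exact mul_le_mul_of_nonneg_right (abs_momentOp_le hcont hCa hs n) (abs_nonneg _)
    · filter_upwards [ae_restrict_mem measurableSet_Ioi] with s hs
      exact (tendsto_momentOp_apply hcont hCa hs).mul_const (deriv w s)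
  refine ⟨hA, ?_⟩
  have hkey : ∀ n : ℕ, ∫ s in Set.Ioi (0:ℝ), w s * deriv (momentOp n f) s
      = -∫ s in Set.Ioi (0:ℝ), momentOp n f s * deriv w s := by
    intro n
    have hderiv : ∀ s : ℝ, 0 < s → deriv (momentOp n f) s = momentOpD n f s :=
      fun s hs => (hasDerivAt_momentOp hcont hs n).deriv
    have h1B : (1:ℝ) ≤ B := hB1.le
    have hsub : Set.Ioc (1:ℝ) B ⊆ Set.Ioi 0 := fun x hx => lt_trans one_pos hx.1
    have hIcc : Set.uIcc (1:ℝ) B ⊆ Set.Ioi 0 := by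
      rw [Set.uIcc_of_le h1B]
      intro x hx; exact lt_of_lt_of_le one_pos hx.1
    have hL1 : ∫ s in Set.Ioi (0:ℝ), w s * deriv (momentOp n f) s
        = ∫ s in Set.Ioc (1:ℝ) B, w s * deriv (momentOp n f) s := by
      refine setIntegral_eq_of_subset_of_ae_diff_eq_zero measurableSet_Ioi.nullMeasurableSet
        hsub (ae_of_all _ ?_)
      intro x hx
      obtain ⟨hx0, hx1⟩ := hx
      rcases le_or_gt x 1 with hle | hgt
      · have hdz : deriv (momentOp n f) x = 0 := by
          have hev : momentOp n f =ᶠ[𝓝 x] (fun _ => (0:ℝ)) := by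
            filter_upwards [Iio_mem_nhds (lt_of_le_of_lt hle ha)] with y hy
            exact hg0 n y (le_of_lt hy)
          rw [hev.deriv_eq]; exact deriv_const x 0
        rw [hdz, mul_zero]
      · have hxB : B < x := by
          by_contra hxB
          exact hx1 ⟨hgt, not_lt.mp hxB⟩
        rw [hwB x hxB.le, zero_mul]
    have hR1 : ∫ s in Set.Ioi (0:ℝ), momentOp n f s * deriv w s
        = ∫ s in Set.Ioc (1:ℝ) B, momentOp n f s * deriv w s := by
      refine setIntegral_eq_of_subset_of_ae_diff_eq_zero measurableSet_Ioi.nullMeasurableSet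
        hsub (ae_of_all _ ?_)
      intro x hx
      obtain ⟨hx0, hx1⟩ := hx
      rcases le_or_gt x 1 with hle | hgt
      · rw [hg0 n x (by linarith), zero_mul]
      · have hxB : B < x := by
          by_contra hxB
          exact hx1 ⟨hgt, not_lt.mp hxB⟩
        rw [hw'B x hxB.le, mul_zero]
    have hftc : ∫ s in (1:ℝ)..B, (deriv w s * momentOp n f s + w s * momentOpD n f s)
        = w B * momentOp n f B - w 1 * momentOp n f 1 := by
      apply intervalIntegral.integral_eq_sub_of_hasDerivAt (f := fun s => w s * momentOp n f s)
      · intro s hsmem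
        have hs0 : 0 < s := hIcc hsmem
        exact ((hwdiff s).hasDerivAt).mul (hasDerivAt_momentOp hcont hs0 n)
      · apply ContinuousOn.intervalIntegrable
        exact ((hw'.continuousOn.mul ((continuousOn_momentOp hcont n).mono hIcc)).add
          (hwc.continuousOn.mul ((continuousOn_momentOpD hcont n).mono hIcc)))
    have hzero : w B * momentOp n f B - w 1 * momentOp n f 1 = 0 := by
      rw [hwB B le_rfl, hg0 n 1 ha.le]; ring
    have hint1 : IntervalIntegrable (fun s => deriv w s * momentOp n f s) volume 1 B :=
      (hw'.continuousOn.mul ((continuousOn_momentOp hcont n).mono hIcc)).intervalIntegrable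
    have hint2 : IntervalIntegrable (fun s => w s * momentOpD n f s) volume 1 B :=
      (hwc.continuousOn.mul ((continuousOn_momentOpD hcont n).mono hIcc)).intervalIntegrable
    have hsum : (∫ s in (1:ℝ)..B, deriv w s * momentOp n f s)
        + ∫ s in (1:ℝ)..B, w s * momentOpD n f s = 0 := by
      rw [← intervalIntegral.integral_add hint1 hint2, hftc, hzero]
    have hcongrL : ∫ s in (1:ℝ)..B, w s * deriv (momentOp n f) s
        = ∫ s in (1:ℝ)..B, w s * momentOpD n f s := by
      apply intervalIntegral.integral_congr
      intro s hs
      show w s * deriv (momentOp n f) s = w s * momentOpD n f s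
      rw [hderiv s (hIcc hs)]
    have hcongrR : ∫ s in (1:ℝ)..B, momentOp n f s * deriv w s
        = ∫ s in (1:ℝ)..B, deriv w s * momentOp n f s := by
      apply intervalIntegral.integral_congr
      intro s _
      ring
    rw [hL1, hR1, ← intervalIntegral.integral_of_le h1B, ← intervalIntegral.integral_of_le h1B,
      hcongrL, hcongrR]
    linarith [hsum]
  have heq : (fun n : ℕ => ∫ s in Set.Ioi (0:ℝ), w s * deriv (momentOp n f) s)
      = fun n : ℕ => -∫ s in Set.Ioi (0:ℝ), momentOp n f s * deriv w s := funext hkey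
  rw [heq]
  exact hA.neg
end
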